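/- Let 𝒯 be a set of MUL-trees, each with more than one leaf, with label sets contained in a finite species set X. For any integer k, there exists a beaded tree on X with a bead at the root and reticulation number k that weakly displays every MUL-tree in 𝒯 if and only if there exists a beaded tree on X with reticulation number k−1 that weakly displays every MUL-tree in F1(𝒯). -/

import Mathlib

/-!
Common formal framework for MUL-trees, phylogenetic networks, beaded trees,
duplication trees, weak embeddings and related operations, following
van Iersel, Janssen, Jones, Murakami, Zeh,
"Polynomial-Time Algorithms for Phylogenetic Inference Problems involving
duplication and reticulation".

All graphs are directed multigraphs on natural-number vertices, given by a
finite vertex set, an edge-multiplicity function and a (partial) leaf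
labelling by species (also natural numbers).
-/

open scoped Classical

structure DG where
  verts : Finset ℕ
  mult : ℕ → ℕ → ℕ
  label : ℕ → Option ℕ

namespace DG

/-- An arc is a pair of endpoints together with the index of the parallel copy. -/
abbrev Arc := ℕ × ℕ × ℕ

def Adj (G : DG) (u v : ℕ) : Prop := 0 < G.mult u v

def outDeg (G : DG) (u : ℕ) : ℕ := ∑ v ∈ G.verts, G.mult u v
def inDeg (G : DG) (v : ℕ) : ℕ := ∑ u ∈ G.verts, G.mult u v

/-- `G.Reaches u v` : `u` is an ancestor of `v` (possibly `u = v`). -/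
def Reaches (G : DG) : ℕ → ℕ → Prop := Relation.ReflTransGen G.Adj
/-- `G.SReaches u v` : `u` is a strict ancestor of `v` (in an acyclic graph). -/
def SReaches (G : DG) : ℕ → ℕ → Prop := Relation.TransGen G.Adj
def Acyclic (G : DG) : Prop := ∀ v, ¬ G.SReaches v v

def IsRoot (G : DG) (v : ℕ) : Prop := v ∈ G.verts ∧ G.inDeg v = 0 ∧ G.outDeg v = 1
def IsLeafNode (G : DG) (v : ℕ) : Prop := v ∈ G.verts ∧ G.inDeg v = 1 ∧ G.outDeg v = 0
def IsTreeNode (G : DG) (v : ℕ) : Prop := v ∈ G.verts ∧ G.inDeg v = 1 ∧ G.outDeg v = 2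
def IsRetic (G : DG) (v : ℕ) : Prop := v ∈ G.verts ∧ G.inDeg v = 2 ∧ G.outDeg v = 1
def IsDupNode (G : DG) (v : ℕ) : Prop := v ∈ G.verts ∧ G.inDeg v = 1 ∧ G.outDeg v = 1

/-- The reticulation number: the number of reticulation nodes. -/
def reticNum (G : DG) : ℕ := (G.verts.filter (fun v => G.inDeg v = 2 ∧ G.outDeg v = 1)).card
/-- The duplication number: the number of duplication nodes. -/
def dupNum (G : DG) : ℕ := (G.verts.filter (fun v => G.inDeg v = 1 ∧ G.outDeg v = 1)).card
/-- The number of beads (counted by their bottom nodes). -/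
noncomputable def beadNum (G : DG) : ℕ :=
  (G.verts.filter (fun v => ∃ u ∈ G.verts, G.mult u v = 2)).card

def Supported (G : DG) : Prop := ∀ u v, G.Adj u v → u ∈ G.verts ∧ v ∈ G.verts
/-- Exactly the leaves carry labels. -/
def LabelsOnLeaves (G : DG) : Prop := ∀ v, (∃ x, G.label v = some x) ↔ G.IsLeafNode v

/-- The number of leaves (= labelled nodes). -/
def numLeaves (G : DG) : ℕ := (G.verts.filter (fun v => (G.label v).isSome)).card

/-- A multi-labelled tree (MUL-tree) with labels contained in `X`. -/
structure IsMulTree (X : Finset ℕ) (G : DG) : Prop where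
  root : ∃! r, G.IsRoot r
  nodes : ∀ v ∈ G.verts, G.IsRoot v ∨ G.IsTreeNode v ∨ G.IsLeafNode v
  acyclic : G.Acyclic
  simple : ∀ u v, G.mult u v ≤ 1
  supported : G.Supported
  labels : G.LabelsOnLeaves
  labelsSub : ∀ v x, G.label v = some x → x ∈ X

/-- A rooted binary phylogenetic network on `X` (parallel edges allowed). -/
structure IsNetwork (X : Finset ℕ) (G : DG) : Prop where
  root : ∃! r, G.IsRoot r
  nodes : ∀ v ∈ G.verts, G.IsRoot v ∨ G.IsTreeNode v ∨ G.IsRetic v ∨ G.IsLeafNode v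
  acyclic : G.Acyclic
  supported : G.Supported
  labels : G.LabelsOnLeaves
  labelsSub : ∀ v x, G.label v = some x → x ∈ X
  labelsOnto : ∀ x ∈ X, ∃! v, G.label v = some x

/-- A duplication tree on `X`. -/
structure IsDupTree (X : Finset ℕ) (G : DG) : Prop where
  root : ∃! r, G.IsRoot r
  nodes : ∀ v ∈ G.verts, G.IsRoot v ∨ G.IsTreeNode v ∨ G.IsDupNode v ∨ G.IsLeafNode v
  acyclic : G.Acyclic
  simple : ∀ u v, G.mult u v ≤ 1
  supported : G.Supported
  labels : G.LabelsOnLeaves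
  labelsSub : ∀ v x, G.label v = some x → x ∈ X
  labelsOnto : ∀ x ∈ X, ∃! v, G.label v = some x

/-- A beaded tree: a phylogenetic network in which every reticulation node is
the bottom node of a bead (a pair of parallel edges). -/
def IsBeadedTree (X : Finset ℕ) (G : DG) : Prop :=
  IsNetwork X G ∧ ∀ v ∈ G.verts, G.inDeg v = 2 → ∃ u, G.mult u v = 2

def ArcOK (G : DG) (e : Arc) : Prop := e.2.2 < G.mult e.1 e.2.1

/-- `G.IsWalk p a b` : `p` is a (nonempty) directed path of arcs from `a` to `b`. -/
def IsWalk (G : DG) (p : List Arc) (a b : ℕ) : Prop :=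
  p ≠ [] ∧ (∀ e ∈ p, G.ArcOK e) ∧
  List.Chain' (fun e f : Arc => e.2.1 = f.1) p ∧
  p.head?.map Prod.fst = some a ∧
  p.getLast?.map (fun e => e.2.1) = some b

/-- `v` is a node visited by the walk `p`. -/
def OnWalk (p : List Arc) (v : ℕ) : Prop := ∃ e ∈ p, e.1 = v ∨ e.2.1 = v

/-- A weak embedding of a MUL-tree `T` into a network `N`: nodes map to nodes,
edges map to directed paths and the two paths out of an internal node start
with different out-edges. -/
def WeakEmbedding (T N : DG) (h : ℕ → ℕ) (hE : ℕ → ℕ → List Arc) : Prop :=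
  (∀ v ∈ T.verts, h v ∈ N.verts) ∧
  (∀ v, T.IsLeafNode v → N.IsLeafNode (h v) ∧ N.label (h v) = T.label v) ∧
  (∀ u v, T.Adj u v → N.IsWalk (hE u v) (h u) (h v)) ∧
  (∀ x y y', T.Adj x y → T.Adj x y' → y ≠ y' → (hE x y).head? ≠ (hE x y').head?)

/-- `N.Displays T` : `N` weakly displays `T`. -/
def Displays (N T : DG) : Prop := ∃ h hE, WeakEmbedding T N h hE

/-- `x` is a least common ancestor of `y` and `z`. -/
def IsLCA (G : DG) (x y z : ℕ) : Prop :=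
  G.Reaches x y ∧ G.Reaches x z ∧
  ∀ w, G.SReaches x w → ¬ (G.Reaches w y ∧ G.Reaches w z)

/-- A duplication mapping from a MUL-tree `T` to a duplication tree `D`. -/
def DupMapping (T D : DG) (M : ℕ → ℕ) : Prop :=
  (∀ v, T.IsLeafNode v → D.IsLeafNode (M v) ∧ D.label (M v) = T.label v) ∧
  (∀ u v, T.Adj u v → D.SReaches (M u) (M v)) ∧
  (∀ u v v', T.Adj u v → T.Adj u v' → v ≠ v' →
    D.IsLCA (M u) (M v) (M v') ∨ D.IsDupNode (M u))

/-- `D.ConsistentWith T` : there is a duplication mapping from `T` to `D`. -/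
def ConsistentWith (D T : DG) : Prop := ∃ M, DupMapping T D M

/-- A solution to Beaded Tree on `𝒯`: a beaded tree on `X` weakly displaying
every MUL-tree of `𝒯`. -/
def Solution (X : Finset ℕ) (Ts : Set DG) (B : DG) : Prop :=
  IsBeadedTree X B ∧ ∀ T ∈ Ts, B.Displays T

/-- An optimal solution: minimum reticulation number among all solutions. -/
def OptSolution (X : Finset ℕ) (Ts : Set DG) (B : DG) : Prop :=
  Solution X Ts B ∧ ∀ B', Solution X Ts B' → B.reticNum ≤ B'.reticNum

/-- Number of beads traversed by a walk. -/
def beadsOnWalk (G : DG) (p : List Arc) : ℕ :=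
  p.countP (fun e => decide (G.mult e.1 e.2.1 = 2))

/-- Number of duplication nodes traversed by a walk (as arc sources). -/
def dupsOnWalk (G : DG) (p : List Arc) : ℕ :=
  p.countP (fun e => decide (G.inDeg e.1 = 1 ∧ G.outDeg e.1 = 1))

/-- The bead depth: the maximum number of beads on any directed path. -/
noncomputable def beadDepth (G : DG) : ℕ :=
  sSup {n | ∃ p a b, G.IsWalk p a b ∧ G.beadsOnWalk p = n}

/-- A solution to Beaded Tree Depth of minimum bead depth. -/
def DepthOptSolution (X : Finset ℕ) (Ts : Set DG) (B : DG) : Prop :=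
  Solution X Ts B ∧ ∀ B', Solution X Ts B' → B.beadDepth ≤ B'.beadDepth

/-- The child of the root is the top node of a bead. -/
def HasBeadAtRoot (G : DG) : Prop :=
  ∃ r u v, G.IsRoot r ∧ G.Adj r u ∧ G.mult u v = 2

/-- `B` is obtained from `B'` by inserting a new bead `(u,v)` between the root
`r` of `B'` and its child `a`.  Equivalently, `B'` is obtained from `B` by
deleting `u` and `v` and adding an edge from the root to the child of `v`. -/
def AddBeadAtRoot (B' B : DG) : Prop :=
  ∃ r a u v, B'.IsRoot r ∧ B'.Adj r a ∧ u ∉ B'.verts ∧ v ∉ B'.verts ∧ u ≠ v ∧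
    B.verts = insert u (insert v B'.verts) ∧
    B.label = (fun w => if w = u ∨ w = v then none else B'.label w) ∧
    B.mult = (fun s t =>
      if s = r ∧ t = a then 0
      else if s = r ∧ t = u then 1
      else if s = u ∧ t = v then 2
      else if s = v ∧ t = a then 1
      else if s = u ∨ s = v ∨ t = u ∨ t = v then 0
      else B'.mult s t)

/-- `N` is obtained by joining `N1` and `N2`: the two roots are identified into
a single node `u`, which becomes the child of a new root `r`.  The embeddings
`f1`, `f2` realise the copies of `N1` and `N2` inside `N`. -/
def IsJoinOf (N N1 N2 : DG) : Prop :=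
  ∃ (f1 f2 : ℕ → ℕ) (r u : ℕ),
    N.IsRoot r ∧ u ∈ N.verts ∧ N.mult r u = 1 ∧
    Set.InjOn f1 N1.verts ∧ Set.InjOn f2 N2.verts ∧
    (∀ v, N1.IsRoot v → f1 v = u) ∧ (∀ v, N2.IsRoot v → f2 v = u) ∧
    (∀ w, w ∈ N.verts ↔ (w = r ∨ (∃ v ∈ N1.verts, f1 v = w) ∨ (∃ v ∈ N2.verts, f2 v = w))) ∧
    (∀ v1 ∈ N1.verts, ∀ v2 ∈ N2.verts, f1 v1 = f2 v2 → N1.IsRoot v1 ∧ N2.IsRoot v2) ∧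
    (∀ v ∈ N1.verts, f1 v ≠ r) ∧ (∀ v ∈ N2.verts, f2 v ≠ r) ∧
    (∀ a ∈ N1.verts, ∀ b ∈ N1.verts, N.mult (f1 a) (f1 b) = N1.mult a b) ∧
    (∀ a ∈ N2.verts, ∀ b ∈ N2.verts, N.mult (f2 a) (f2 b) = N2.mult a b) ∧
    (∀ a b, N.Adj a b →
      (a = r ∧ b = u) ∨
      (∃ a' ∈ N1.verts, ∃ b' ∈ N1.verts, f1 a' = a ∧ f1 b' = b ∧ N1.Adj a' b') ∨
      (∃ a' ∈ N2.verts, ∃ b' ∈ N2.verts, f2 a' = a ∧ f2 b' = b ∧ N2.Adj a' b')) ∧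
    (∀ v ∈ N1.verts, N.label (f1 v) = N1.label v) ∧
    (∀ v ∈ N2.verts, N.label (f2 v) = N2.label v) ∧
    N.label r = none

/-- Delete a node and all incident edges. -/
def deleteNode (G : DG) (v : ℕ) : DG where
  verts := G.verts.erase v
  mult := fun a b => if a = v ∨ b = v then 0 else G.mult a b
  label := fun a => if a = v then none else G.label a

/-- Suppress an in-degree-1 out-degree-1 node `v` with parent `p` and child `c`. -/
def suppressNode (G : DG) (v p c : ℕ) : DG where
  verts := G.verts.erase v
  mult := fun a b =>
    if a = v ∨ b = v then 0
    else if a = p ∧ b = c then G.mult a b + 1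
    else G.mult a b
  label := fun a => if a = v then none else G.label a

/-- One step of the restriction procedure for label set `S`: delete a leaf
labelled in `S` or an unlabelled node of out-degree 0, or suppress an
unlabelled node of in-degree 1 and out-degree 1. -/
inductive RStep (S : Finset ℕ) : DG → DG → Prop
  | del (G : DG) (v : ℕ) : v ∈ G.verts →
      ((∃ x ∈ S, G.label v = some x) ∨ (G.label v = none ∧ G.outDeg v = 0)) →
      RStep S G (G.deleteNode v)
  | suppress (G : DG) (v p c : ℕ) : v ∈ G.verts → G.label v = none →
      G.mult p v = 1 → G.inDeg v = 1 → G.mult v c = 1 → G.outDeg v = 1 →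
      RStep S G (G.suppressNode v p c)

/-- `Restricts S G G'` : `G' = G ∖ S`, i.e. `G'` is obtained from `G` by
deleting all leaves labelled in `S` and exhaustively deleting unlabelled nodes
of out-degree 0 and suppressing in-degree-1 out-degree-1 nodes. -/
def Restricts (S : Finset ℕ) (G G' : DG) : Prop :=
  Relation.ReflTransGen (RStep S) G G' ∧ ∀ H, ¬ RStep S G' H

/-- `𝒯 ∖ S` for a set of MUL-trees (empty results discarded). -/
def SetRestrict (S : Finset ℕ) (Ts : Set DG) : Set DG :=
  {T' | T'.verts.Nonempty ∧ ∃ T ∈ Ts, Restricts S T T'}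

/-- The member of the depth-1 forest of `T` keeping `y` and discarding the
subtree rooted at `y'` (here `r` is the root, `x` its child, `y,y'` the
children of `x`, which is suppressed). -/
noncomputable def f1del (T : DG) (r x y y' : ℕ) : DG where
  verts := (T.verts.filter (fun v => ¬ T.Reaches y' v)).erase x
  mult := fun a b =>
    if a = r ∧ b = y then 1
    else if a = x ∨ b = x ∨ T.Reaches y' a ∨ T.Reaches y' b then 0
    else T.mult a b
  label := fun v => if v = x ∨ T.Reaches y' v then none else T.label v

/-- `T'` is one of the two members of the depth-1 forest `F1(T)`. -/
def InF1 (T T' : DG) : Prop :=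
  ∃ r x y y', T.IsRoot r ∧ T.Adj r x ∧ T.Adj x y ∧ T.Adj x y' ∧ y ≠ y' ∧
    T' = f1del T r x y y'

/-- `F1(𝒯)`. -/
def F1Set (Ts : Set DG) : Set DG := {T' | ∃ T ∈ Ts, InF1 T T'}

/-- Two species labels occur in the same member of `F1(𝒯)`. -/
def SplitRel (Ts : Set DG) (a b : ℕ) : Prop :=
  ∃ T' ∈ F1Set Ts, (∃ u, T'.label u = some a) ∧ (∃ v, T'.label v = some b)

/-- `S` is one of the classes of the split partition of `X` for `𝒯`. -/
def SplitPart (X : Finset ℕ) (Ts : Set DG) (S : Finset ℕ) : Prop :=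
  ∃ a ∈ X, S = X.filter (fun b => Relation.EqvGen (SplitRel Ts) a b)

end DG


namespace DG

/-! ### Basic helper lemmas -/

lemma adj_of_mult_pos {G : DG} {s t : ℕ} (h : 0 < G.mult s t) : G.Adj s t := h

lemma mem_of_adj {G : DG} (hS : G.Supported) {s t : ℕ} (h : G.Adj s t) :
    s ∈ G.verts ∧ t ∈ G.verts := hS s t h

lemma sum_zero_all {s : Finset ℕ} {f : ℕ → ℕ} (h : ∑ x ∈ s, f x = 0) :
    ∀ x ∈ s, f x = 0 := by
  intro x hx
  exact Finset.sum_eq_zero_iff.mp h x hx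

lemma outDeg_zero_all {G : DG} (hS : G.Supported) {w : ℕ} (h : G.outDeg w = 0) :
    ∀ t, G.mult w t = 0 := by
  intro t
  by_cases ht : t ∈ G.verts
  · exact sum_zero_all h t ht
  · by_contra h0
    exact ht (hS w t (Nat.pos_of_ne_zero h0)).2

lemma inDeg_zero_all {G : DG} (hS : G.Supported) {w : ℕ} (h : G.inDeg w = 0) :
    ∀ q, G.mult q w = 0 := by
  intro q
  by_cases hq : q ∈ G.verts
  · exact sum_zero_all h q hq
  · by_contra h0
    exact hq (hS q w (Nat.pos_of_ne_zero h0)).1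

/-- If the whole (finite, ℕ-valued) sum is concentrated on `a`, all other terms vanish. -/
lemma sum_concentrated {s : Finset ℕ} {f : ℕ → ℕ} {n : ℕ} {a : ℕ} (ha : a ∈ s)
    (hfa : n ≤ f a) (hsum : ∑ x ∈ s, f x = n) : ∀ b ∈ s, b ≠ a → f b = 0 := by
  intro b hb hba
  have h1 : f a + ∑ x ∈ s.erase a, f x = ∑ x ∈ s, f x := Finset.add_sum_erase s f ha
  have h2 : ∑ x ∈ s.erase a, f x = 0 := by omega
  exact sum_zero_all h2 b (Finset.mem_erase.mpr ⟨hba, hb⟩)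

lemma sum_pos_exists {s : Finset ℕ} {f : ℕ → ℕ} (h : 0 < ∑ x ∈ s, f x) :
    ∃ a ∈ s, 0 < f a := by
  by_contra hc
  push_neg at hc
  have : ∑ x ∈ s, f x = 0 := Finset.sum_eq_zero (fun x hx => Nat.le_zero.mp (hc x hx))
  omega

lemma le_sum_of_mem {s : Finset ℕ} {f : ℕ → ℕ} {a : ℕ} (ha : a ∈ s) :
    f a ≤ ∑ x ∈ s, f x := Finset.single_le_sum (fun _ _ => Nat.zero_le _) ha

/-- From `outDeg w = 1` extract the unique out-neighbour. -/
lemma outDeg_one_unique {G : DG} (hS : G.Supported) {w : ℕ} (h : G.outDeg w = 1) :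
    ∃ a, G.mult w a = 1 ∧ ∀ t, t ≠ a → G.mult w t = 0 := by
  obtain ⟨a, ha, hfa⟩ := sum_pos_exists (s := G.verts) (f := fun t => G.mult w t) (by rw [← outDeg]; omega)
  have h1 : G.mult w a ≤ 1 := h ▸ le_sum_of_mem ha
  refine ⟨a, by omega, ?_⟩
  intro t ht
  by_cases htm : t ∈ G.verts
  · exact sum_concentrated ha (by omega) h t htm ht
  · by_contra h0
    exact htm (hS w t (Nat.pos_of_ne_zero h0)).2

lemma inDeg_one_unique {G : DG} (hS : G.Supported) {w : ℕ} (h : G.inDeg w = 1) :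
    ∃ p, G.mult p w = 1 ∧ ∀ q, q ≠ p → G.mult q w = 0 := by
  obtain ⟨a, ha, hfa⟩ := sum_pos_exists (s := G.verts) (f := fun q => G.mult q w) (by rw [← inDeg]; omega)
  have h1 : G.mult a w ≤ 1 := by
    have h2 := le_sum_of_mem (s := G.verts) (f := fun q => G.mult q w) ha
    rw [show (∑ q ∈ G.verts, G.mult q w) = G.inDeg w from rfl, h] at h2
    exact h2
  refine ⟨a, by omega, ?_⟩
  intro q hq
  by_cases hqm : q ∈ G.verts
  · exact sum_concentrated ha (by omega) h q hqm hq
  · by_contra h0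
    exact hqm (hS q w (Nat.pos_of_ne_zero h0)).1

/-- Unique parent from `inDeg = 1`. -/
lemma parent_unique {G : DG} (hS : G.Supported) {w p q : ℕ} (h : G.inDeg w = 1)
    (hp : 0 < G.mult p w) (hq : 0 < G.mult q w) : p = q := by
  obtain ⟨p0, hp0, hother⟩ := inDeg_one_unique hS h
  have h1 : p = p0 := by
    by_contra hne; have := hother p hne; omega
  have h2 : q = p0 := by
    by_contra hne; have := hother q hne; omega
  omega

/-- If a node with known single parent value: from `inDeg w = n`, `mult p w = n`, `p ∈ verts`,
all other in-multiplicities vanish. -/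
lemma inDeg_concentrated {G : DG} (hS : G.Supported) {w p n : ℕ} (hp : p ∈ G.verts)
    (h : G.inDeg w = n) (hm : n ≤ G.mult p w) : ∀ q, q ≠ p → G.mult q w = 0 := by
  intro q hq
  by_cases hqm : q ∈ G.verts
  · exact sum_concentrated hp hm h q hqm hq
  · by_contra h0
    exact hqm (hS q w (Nat.pos_of_ne_zero h0)).1

lemma outDeg_concentrated {G : DG} (hS : G.Supported) {w a n : ℕ} (ha : a ∈ G.verts)
    (h : G.outDeg w = n) (hm : n ≤ G.mult w a) : ∀ t, t ≠ a → G.mult w t = 0 := by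
  intro t ht
  by_cases htm : t ∈ G.verts
  · exact sum_concentrated ha hm h t htm ht
  · by_contra h0
    exact htm (hS w t (Nat.pos_of_ne_zero h0)).2

/-! ### Rank machinery -/

noncomputable def rnk (G : DG) (w : ℕ) : ℕ := (G.verts.filter (fun z => G.SReaches z w)).card

lemma rnk_lt {G : DG} (hA : G.Acyclic) (hS : G.Supported) {s t : ℕ} (h : G.Adj s t) :
    G.rnk s < G.rnk t := by
  apply Finset.card_lt_card
  constructor
  · intro z hz
    rw [Finset.mem_filter] at hz ⊢
    exact ⟨hz.1, hz.2.trans (Relation.TransGen.single h)⟩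
  · intro hsub
    have hs : s ∈ G.verts.filter (fun z => G.SReaches z t) :=
      Finset.mem_filter.mpr ⟨(hS s t h).1, Relation.TransGen.single h⟩
    have := Finset.mem_filter.mp (hsub hs)
    exact hA s this.2

lemma rnk_lt_of_sreaches {G : DG} (hA : G.Acyclic) (hS : G.Supported) {s t : ℕ}
    (h : G.SReaches s t) : G.rnk s < G.rnk t := by
  induction h with
  | single h => exact rnk_lt hA hS h
  | tail _ h2 ih => exact lt_trans ih (rnk_lt hA hS h2)

lemma acyclic_of_rank {G : DG} (f : ℕ → ℕ) (hf : ∀ s t, G.Adj s t → f s < f t) :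
    G.Acyclic := by
  intro w hw
  have key : ∀ a b, G.SReaches a b → f a < f b := by
    intro a b h
    induction h with
    | single h => exact hf _ _ h
    | tail _ h2 ih => exact lt_trans ih (hf _ _ h2)
  exact absurd (key w w hw) (lt_irrefl _)

/-! ### Walk machinery -/

lemma isWalk_singleton {G : DG} {e : Arc} {s t : ℕ} (h : G.IsWalk [e] s t) :
    e.1 = s ∧ e.2.1 = t ∧ G.ArcOK e := by
  obtain ⟨_, hok, _, hh, hl⟩ := h
  simp at hh hl
  exact ⟨hh, hl, hok e (by simp)⟩

lemma isWalk_cons {G : DG} {e : Arc} {p : List Arc} {s t : ℕ}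
    (h : G.IsWalk (e :: p) s t) :
    e.1 = s ∧ G.ArcOK e ∧ (p = [] → e.2.1 = t) ∧ (p ≠ [] → G.IsWalk p e.2.1 t) := by
  obtain ⟨hne, hok, hch, hh, hl⟩ := h
  simp at hh
  refine ⟨hh, hok e (by simp), ?_, ?_⟩
  · intro hp; subst hp; simpa using hl
  · intro hp
    obtain ⟨f, q, rfl⟩ := List.exists_cons_of_ne_nil hp
    simp only [List.Chain', List.isChain_cons_cons] at hch
    refine ⟨by simp, fun e' he' => hok e' (by simp [he']), hch.2, ?_, ?_⟩
    · simp [hch.1]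
    · simpa using hl

lemma isWalk_head {G : DG} {p : List Arc} {s t : ℕ} (h : G.IsWalk p s t) :
    ∃ e, p.head? = some e ∧ e ∈ p ∧ e.1 = s ∧ G.ArcOK e := by
  obtain ⟨e, q, rfl⟩ := List.exists_cons_of_ne_nil h.1
  have := isWalk_cons h
  exact ⟨e, rfl, by simp, this.1, this.2.1⟩

lemma isWalk_last {G : DG} {p : List Arc} {s t : ℕ} (h : G.IsWalk p s t) :
    ∃ e ∈ p, e.2.1 = t ∧ G.ArcOK e := by
  obtain ⟨hne, hok, hch, hh, hl⟩ := h
  obtain ⟨e, he⟩ := Option.map_eq_some_iff.mp hl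
  have hmem : e ∈ p := List.mem_of_getLast? he.1
  exact ⟨e, hmem, he.2, hok e hmem⟩

/-- The target of a walk has an in-arc. -/
lemma walk_target_adj {G : DG} {p : List Arc} {s t : ℕ} (h : G.IsWalk p s t) :
    ∃ q, G.Adj q t := by
  obtain ⟨e, _, het, hok⟩ := isWalk_last h
  refine ⟨e.1, ?_⟩
  have h0 : 0 < G.mult e.1 e.2.1 := lt_of_le_of_lt (Nat.zero_le _) hok
  rw [het] at h0
  exact h0

lemma walk_target_adj' {G : DG} {p : List Arc} {s t : ℕ} (h : G.IsWalk p s t) :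
    ∃ q, 0 < G.mult q t := by
  obtain ⟨e, _, het, hok⟩ := isWalk_last h
  refine ⟨e.1, ?_⟩
  have : 0 < G.mult e.1 e.2.1 := lt_of_le_of_lt (Nat.zero_le _) hok
  rwa [het] at this

lemma isWalk_sreaches {G : DG} {p : List Arc} {s t : ℕ} (h : G.IsWalk p s t) :
    G.SReaches s t := by
  induction p generalizing s with
  | nil => exact absurd rfl h.1
  | cons e q ih =>
    obtain ⟨h1, hok, h3, h4⟩ := isWalk_cons h
    have hadj : G.Adj s e.2.1 := by
      rw [← h1]; exact lt_of_le_of_lt (Nat.zero_le _) hok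
    by_cases hq : q = []
    · rw [h3 hq] at hadj; exact Relation.TransGen.single hadj
    · exact Relation.TransGen.head hadj (ih (h4 hq))

/-- If `bad` is closed under taking predecessors and the start is good,
a walk avoids `bad` entirely. -/
lemma walk_avoid {G : DG} (bad : ℕ → Prop)
    (hcl : ∀ q w, G.Adj q w → bad w → bad q) {p : List Arc} {s t : ℕ}
    (h : G.IsWalk p s t) (hs : ¬ bad s) : ∀ e ∈ p, ¬ bad e.1 ∧ ¬ bad e.2.1 := by
  induction p generalizing s with
  | nil => simp
  | cons e q ih =>
    obtain ⟨h1, hok, h3, h4⟩ := isWalk_cons h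
    have hadj : G.Adj e.1 e.2.1 := lt_of_le_of_lt (Nat.zero_le _) hok
    have hne1 : ¬ bad e.1 := h1 ▸ hs
    have hne2 : ¬ bad e.2.1 := fun hb => hne1 (hcl _ _ hadj hb)
    intro e' he'
    rcases List.mem_cons.mp he' with rfl | hmem
    · exact ⟨hne1, hne2⟩
    · have hq : q ≠ [] := by rintro rfl; simp at hmem
      exact ih (h4 hq) hne2 e' hmem

lemma walk_avoid_target {G : DG} (bad : ℕ → Prop)
    (hcl : ∀ q w, G.Adj q w → bad w → bad q) {p : List Arc} {s t : ℕ}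
    (h : G.IsWalk p s t) (hs : ¬ bad s) : ¬ bad t := by
  obtain ⟨e, hmem, het, _⟩ := isWalk_last h
  rw [← het]
  exact (walk_avoid bad hcl h hs e hmem).2

lemma isWalk_concat {G : DG} {p : List Arc} {s t c : ℕ} (hw : G.IsWalk p s t)
    (h : G.Adj t c) : G.IsWalk (p ++ [(t, c, 0)]) s c := by
  obtain ⟨hne, hok, hch, hh, hl⟩ := hw
  refine ⟨by simp, ?_, ?_, ?_, ?_⟩
  · intro e he
    rcases List.mem_append.mp he with he | he
    · exact hok e he
    · simp at he; subst he; exact h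
  · apply List.IsChain.append hch (by simp)
    intro a ha b hb
    simp at hb
    subst hb
    rw [Option.mem_def] at ha
    rw [ha] at hl
    simpa using hl
  · obtain ⟨e, q, rfl⟩ := List.exists_cons_of_ne_nil hne
    simpa using hh
  · simp

lemma reach_walk {G : DG} {s t : ℕ} (h : Relation.TransGen G.Adj s t) :
    ∃ p, G.IsWalk p s t := by
  induction h with
  | single h =>
    exact ⟨[(s, _, 0)], by simp, fun e he => by simp at he; subst he; exact h, by simp [List.Chain'], by simp, by simp⟩
  | tail _ h2 ih =>
    obtain ⟨p, hp⟩ := ih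
    exact ⟨_, isWalk_concat hp h2⟩

/-- In an acyclic supported graph in which every non-`r` vertex has positive
in-degree, every vertex is reachable from `r`. -/
lemma root_reach {G : DG} (hA : G.Acyclic) (hS : G.Supported) (r : ℕ)
    (hin : ∀ w ∈ G.verts, w ≠ r → 0 < G.inDeg w) :
    ∀ w ∈ G.verts, w ≠ r → Relation.TransGen G.Adj r w := by
  have key : ∀ n, ∀ w ∈ G.verts, G.rnk w ≤ n → w ≠ r → Relation.TransGen G.Adj r w := by
    intro n
    induction n with
    | zero =>
      intro w hw hr hwr
      obtain ⟨q, hq, hqm⟩ := sum_pos_exists (hin w hw hwr)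
      have : G.rnk q < G.rnk w := rnk_lt hA hS hqm
      omega
    | succ n ih =>
      intro w hw hr hwr
      obtain ⟨q, hq, hqm⟩ := sum_pos_exists (hin w hw hwr)
      have hadj : G.Adj q w := hqm
      have hlt : G.rnk q < G.rnk w := rnk_lt hA hS hadj
      by_cases hqr : q = r
      · subst hqr; exact Relation.TransGen.single hadj
      · exact Relation.TransGen.tail (ih q hq (by omega) hqr) hadj
  intro w hw hwr
  exact key (G.rnk w) w hw (le_refl _) hwr

/-- A node out of which there is (at most) one arc cannot be the image of a
branching node of an embedding. -/
lemma no_branch_at {T N : DG} {h : ℕ → ℕ} {hE : ℕ → ℕ → List Arc}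
    (hemb : WeakEmbedding T N h hE) {s c c' z : ℕ}
    (hc : T.Adj s c) (hc' : T.Adj s c') (hcc : c ≠ c') (hz : h s = z)
    (huniq : ∀ e e' : Arc, N.ArcOK e → N.ArcOK e' → e.1 = z → e'.1 = z → e = e') :
    False := by
  obtain ⟨_, _, hwalk, hdiv⟩ := hemb
  obtain ⟨e1, he1, _, he1s, he1ok⟩ := isWalk_head (hwalk s c hc)
  obtain ⟨e2, he2, _, he2s, he2ok⟩ := isWalk_head (hwalk s c' hc')
  have : e1 = e2 := huniq e1 e2 he1ok he2ok (by rw [he1s, hz]) (by rw [he2s, hz])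
  exact hdiv s c c' hc hc' hcc (by rw [he1, he2, this])

/-- From `mult z a = m` (0 < m) and all other out-multiplicities zero and `m ≤ 1`:
all arcs out of `z` coincide. -/
lemma single_arc_of {N : DG} {z a : ℕ} (hm : N.mult z a = 1)
    (h0 : ∀ t, t ≠ a → N.mult z t = 0) :
    ∀ e e' : Arc, N.ArcOK e → N.ArcOK e' → e.1 = z → e'.1 = z → e = e' := by
  have harc : ∀ e : Arc, N.ArcOK e → e.1 = z → e = (z, a, 0) := by
    rintro ⟨u, t, i⟩ hok rfl
    simp only [ArcOK] at hok
    have ht : t = a := by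
      by_contra hta
      rw [h0 t hta] at hok; omega
    subst ht
    rw [hm] at hok
    have : i = 0 := by omega
    subst this; rfl
  intro e e' he he' h1 h1'
  rw [harc e he h1, harc e' he' h1']

end DG


namespace DG

lemma adj_iff {G : DG} {s t : ℕ} : G.Adj s t ↔ 0 < G.mult s t := Iff.rfl

/-- Comparability of ancestors in graphs with unique parents. -/
lemma reach_comparable {G : DG} (hS : G.Supported) (hA : G.Acyclic)
    (hup : ∀ w p q, 0 < G.mult p w → 0 < G.mult q w → p = q) :
    ∀ w s1 s2, G.Reaches s1 w → G.Reaches s2 w → G.Reaches s1 s2 ∨ G.Reaches s2 s1 := by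
  have key : ∀ n w, G.rnk w ≤ n → ∀ s1 s2, G.Reaches s1 w → G.Reaches s2 w →
      G.Reaches s1 s2 ∨ G.Reaches s2 s1 := by
    intro n
    induction n with
    | zero =>
      intro w hw s1 s2 h1 h2
      rcases Relation.ReflTransGen.cases_tail h1 with rfl | ⟨c1, hc1, hadj1⟩
      · exact Or.inr h2
      rcases Relation.ReflTransGen.cases_tail h2 with rfl | ⟨c2, hc2, hadj2⟩
      · exact Or.inl h1
      have := rnk_lt hA hS hadj1
      omega
    | succ n ih =>
      intro w hw s1 s2 h1 h2
      rcases Relation.ReflTransGen.cases_tail h1 with rfl | ⟨c1, hc1, hadj1⟩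
      · exact Or.inr h2
      rcases Relation.ReflTransGen.cases_tail h2 with rfl | ⟨c2, hc2, hadj2⟩
      · exact Or.inl h1
      have hceq : c1 = c2 := hup w c1 c2 hadj1 hadj2
      subst hceq
      have hlt := rnk_lt hA hS hadj1
      exact ih c1 (by omega) s1 s2 hc1 hc2
  intro w s1 s2 h1 h2
  exact key (G.rnk w) w (le_refl _) s1 s2 h1 h2

/-- Context: a MUL-tree `T` with root `r`, root child `x`, and children `y ≠ y'` of `x`. -/
structure F1Ctx (X : Finset ℕ) (T : DG) (r x y y' : ℕ) : Prop where
  mt : IsMulTree X T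
  hroot : T.IsRoot r
  hrx : T.Adj r x
  hxy : T.Adj x y
  hxy' : T.Adj x y'
  hyy' : y ≠ y'

namespace F1Ctx

variable {X : Finset ℕ} {T : DG} {r x y y' : ℕ} (C : F1Ctx X T r x y y')
include C

lemma swap : F1Ctx X T r x y' y := ⟨C.mt, C.hroot, C.hrx, C.hxy', C.hxy, C.hyy'.symm⟩

lemma hS : T.Supported := C.mt.supported
lemma hA : T.Acyclic := C.mt.acyclic

lemma root_eq : ∀ w, T.IsRoot w → w = r := by
  intro w hw
  obtain ⟨r0, hr0, hu⟩ := C.mt.root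
  rw [hu w hw, hu r C.hroot]

lemma r_mem : r ∈ T.verts := C.hroot.1
lemma x_mem : x ∈ T.verts := (C.hS r x C.hrx).2
lemma y_mem : y ∈ T.verts := (C.hS x y C.hxy).2
lemma y'_mem : y' ∈ T.verts := (C.hS x y' C.hxy').2

lemma mult_into_r : ∀ q, T.mult q r = 0 := inDeg_zero_all C.hS C.hroot.2.1

lemma x_ne_r : x ≠ r := by
  rintro rfl
  exact C.hA x (Relation.TransGen.single C.hrx)

lemma y_ne_x : y ≠ x := by
  rintro rfl
  exact C.hA y (Relation.TransGen.single C.hxy)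

lemma y'_ne_x : y' ≠ x := by
  rintro rfl
  exact C.hA y' (Relation.TransGen.single C.hxy')

lemma r_child : T.mult r x = 1 ∧ ∀ t, t ≠ x → T.mult r t = 0 := by
  obtain ⟨a, ha1, ha0⟩ := outDeg_one_unique C.hS C.hroot.2.2
  have hax : x = a := by
    by_contra h
    have := ha0 x h
    have hx := C.hrx
    rw [adj_iff] at hx
    omega
  subst hax
  exact ⟨ha1, ha0⟩

lemma inDeg_one : ∀ w ∈ T.verts, w ≠ r → T.inDeg w = 1 := by
  intro w hw hwr
  rcases C.mt.nodes w hw with h | h | h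
  · exact absurd (C.root_eq w h) hwr
  · exact h.2.1
  · exact h.2.1

lemma y_ne_r : y ≠ r := by
  rintro rfl
  have := C.mult_into_r x
  have hx := C.hxy
  rw [adj_iff] at hx
  omega

lemma y'_ne_r : y' ≠ r := by
  rintro rfl
  have := C.mult_into_r x
  have hx := C.hxy'
  rw [adj_iff] at hx
  omega

lemma mult_into_x : ∀ q, q ≠ r → T.mult q x = 0 := by
  have hin : T.inDeg x = 1 := C.inDeg_one x C.x_mem C.x_ne_r
  exact inDeg_concentrated C.hS C.r_mem hin (by have := C.r_child.1; omega)

lemma x_tree : T.inDeg x = 1 ∧ T.outDeg x = 2 := by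
  refine ⟨C.inDeg_one x C.x_mem C.x_ne_r, ?_⟩
  rcases C.mt.nodes x C.x_mem with h | h | h
  · exact absurd (C.root_eq x h) C.x_ne_r
  · exact h.2.2
  · exfalso
    have h3 := outDeg_zero_all C.hS h.2.2 y
    have h2 := C.hxy
    rw [adj_iff] at h2
    omega

lemma x_children : T.mult x y = 1 ∧ T.mult x y' = 1 ∧
    ∀ t, t ≠ y → t ≠ y' → T.mult x t = 0 := by
  have hy := C.hxy; have hy' := C.hxy'
  rw [adj_iff] at hy hy'
  have hsy : T.mult x y ≤ 1 := C.mt.simple x y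
  have hsy' : T.mult x y' ≤ 1 := C.mt.simple x y'
  have h1 : T.mult x y = 1 := by omega
  have h2 : T.mult x y' = 1 := by omega
  refine ⟨h1, h2, ?_⟩
  have hy'm : y' ∈ T.verts.erase y := Finset.mem_erase.mpr ⟨C.hyy'.symm, C.y'_mem⟩
  have e1 : T.mult x y + ∑ t ∈ T.verts.erase y, T.mult x t = ∑ t ∈ T.verts, T.mult x t :=
    Finset.add_sum_erase _ _ C.y_mem
  have e2 : T.mult x y' + ∑ t ∈ (T.verts.erase y).erase y', T.mult x t
      = ∑ t ∈ T.verts.erase y, T.mult x t :=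
    Finset.add_sum_erase _ _ hy'm
  have e3 : (∑ t ∈ T.verts, T.mult x t) = 2 := C.x_tree.2
  have hz : ∑ t ∈ (T.verts.erase y).erase y', T.mult x t = 0 := by omega
  intro t hty hty'
  by_cases htm : t ∈ T.verts
  · exact sum_zero_all hz t (Finset.mem_erase.mpr ⟨hty', Finset.mem_erase.mpr ⟨hty, htm⟩⟩)
  · by_contra h0
    exact htm (C.hS x t (Nat.pos_of_ne_zero h0)).2

lemma mult_into_y : ∀ q, q ≠ x → T.mult q y = 0 := by
  have hin : T.inDeg y = 1 := C.inDeg_one y C.y_mem C.y_ne_r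
  exact inDeg_concentrated C.hS C.x_mem hin (by have := C.x_children.1; omega)

lemma mult_into_y' : ∀ q, q ≠ x → T.mult q y' = 0 := by
  have hin : T.inDeg y' = 1 := C.inDeg_one y' C.y'_mem C.y'_ne_r
  exact inDeg_concentrated C.hS C.x_mem hin (by have := C.x_children.2.1; omega)

lemma up_unique : ∀ w p q, 0 < T.mult p w → 0 < T.mult q w → p = q := by
  intro w p q hp hq
  have hw : w ∈ T.verts := (C.hS p w hp).2
  have hwr : w ≠ r := by
    rintro rfl
    have := C.mult_into_r p
    omega
  exact parent_unique C.hS (C.inDeg_one w hw hwr) hp hq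

/-- The down-set of `y'` is closed upwards (within one step) except at its top. -/
lemma reach_y'_step : ∀ q w, T.Adj q w → T.Reaches y' w →
    T.Reaches y' q ∨ (w = y' ∧ q = x) := by
  intro q w hadj hre
  rcases Relation.ReflTransGen.cases_tail hre with rfl | ⟨c, hc, hcw⟩
  · right
    refine ⟨rfl, ?_⟩
    by_contra hqx
    have := C.mult_into_y' q hqx
    rw [adj_iff] at hadj
    omega
  · left
    have : q = c := C.up_unique w q c hadj hcw
    subst this
    exact hc

lemma not_reach_y'_r : ¬ T.Reaches y' r := by
  intro h
  rcases Relation.ReflTransGen.cases_tail h with h1 | ⟨c, hc, hcw⟩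
  · exact C.y'_ne_r h1.symm
  · have := C.mult_into_r c
    rw [adj_iff] at hcw
    omega

lemma not_reach_y'_x : ¬ T.Reaches y' x := by
  intro h
  rcases Relation.ReflTransGen.cases_tail h with h1 | ⟨c, hc, hcw⟩
  · exact C.y'_ne_x h1.symm
  · have hcr : c = r := by
      by_contra hcr
      have := C.mult_into_x c hcr
      rw [adj_iff] at hcw
      omega
    subst hcr
    exact C.not_reach_y'_r hc

lemma not_reach_y'_y : ¬ T.Reaches y' y := by
  intro h
  rcases Relation.ReflTransGen.cases_tail h with h1 | ⟨c, hc, hcw⟩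
  · exact C.hyy' h1
  · have hcx : c = x := by
      by_contra hcx
      have := C.mult_into_y c hcx
      rw [adj_iff] at hcw
      omega
    subst hcx
    exact C.not_reach_y'_x hc

lemma disjoint_desc : ∀ w, T.Reaches y w → ¬ T.Reaches y' w := by
  intro w h1 h2
  rcases reach_comparable C.hS C.hA C.up_unique w y y' h1 h2 with h | h
  · exact C.swap.not_reach_y'_y h
  · exact C.not_reach_y'_y h

/-! ### Lemmas about `f1del T r x y y'` -/

lemma f1_mem {w : ℕ} : w ∈ (f1del T r x y y').verts ↔
    w ∈ T.verts ∧ ¬ T.Reaches y' w ∧ w ≠ x := by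
  simp only [f1del, Finset.mem_erase, Finset.mem_filter]
  tauto

lemma f1_r_mem : r ∈ (f1del T r x y y').verts :=
  C.f1_mem.mpr ⟨C.r_mem, C.not_reach_y'_r, C.x_ne_r.symm⟩

lemma f1_y_mem : y ∈ (f1del T r x y y').verts :=
  C.f1_mem.mpr ⟨C.y_mem, C.not_reach_y'_y, C.y_ne_x⟩

lemma f1_mult_ry : (f1del T r x y y').mult r y = 1 := by
  simp [f1del]

lemma f1_mult_eq {s t : ℕ} (hs : s ≠ r) (hsx : s ≠ x) (htx : t ≠ x)
    (hrs : ¬ T.Reaches y' s) (hrt : ¬ T.Reaches y' t) :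
    (f1del T r x y y').mult s t = T.mult s t := by
  simp [f1del, hs, hsx, htx, hrs, hrt]

lemma f1_mult_eq' {s t : ℕ} (ht : t ≠ y) (hsx : s ≠ x) (htx : t ≠ x)
    (hrs : ¬ T.Reaches y' s) (hrt : ¬ T.Reaches y' t) :
    (f1del T r x y y').mult s t = T.mult s t := by
  have : ¬ (s = r ∧ t = y) := by tauto
  simp [f1del, this, hsx, htx, hrs, hrt]

lemma f1_adj_iff {s t : ℕ} : (f1del T r x y y').Adj s t ↔
    ((s = r ∧ t = y) ∨
      (T.Adj s t ∧ s ≠ x ∧ t ≠ x ∧ ¬ T.Reaches y' s ∧ ¬ T.Reaches y' t)) := by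
  rw [adj_iff]
  show 0 < (if s = r ∧ t = y then 1
    else if s = x ∨ t = x ∨ T.Reaches y' s ∨ T.Reaches y' t then 0 else T.mult s t) ↔ _
  by_cases h1 : s = r ∧ t = y
  · simp [h1]
  · rw [if_neg h1]
    by_cases h2 : s = x ∨ t = x ∨ T.Reaches y' s ∨ T.Reaches y' t
    · simp only [if_pos h2]
      constructor
      · omega
      · rintro (⟨hsr, hty⟩ | ⟨_, h3, h4, h5, h6⟩)
        · exact absurd ⟨hsr, hty⟩ h1
        · tauto
    · rw [if_neg h2]
      push_neg at h2
      rw [← adj_iff]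
      tauto

lemma f1_label {w : ℕ} (hwx : w ≠ x) (hw : ¬ T.Reaches y' w) :
    (f1del T r x y y').label w = T.label w := by
  simp [f1del, hwx, hw]

lemma f1_adj_r {t : ℕ} (h : (f1del T r x y y').Adj r t) : t = y := by
  rcases C.f1_adj_iff.mp h with ⟨_, rfl⟩ | ⟨hadj, _, htx, _, _⟩
  · rfl
  · have h1 := C.r_child.2 t htx
    rw [adj_iff] at hadj
    omega

lemma f1_outDeg : ∀ w ∈ (f1del T r x y y').verts, w ≠ r →
    (f1del T r x y y').outDeg w = T.outDeg w := by
  intro w hw hwr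
  obtain ⟨hwT, hwre, hwx⟩ := C.f1_mem.mp hw
  have h1 : (f1del T r x y y').outDeg w
      = ∑ t ∈ (f1del T r x y y').verts, T.mult w t := by
    apply Finset.sum_congr rfl
    intro t ht
    obtain ⟨_, htre, htx⟩ := C.f1_mem.mp ht
    exact C.f1_mult_eq hwr hwx htx hwre htre
  rw [h1]
  apply Finset.sum_subset
  · intro t ht
    exact (C.f1_mem.mp ht).1
  · intro t htT htn
    rw [C.f1_mem] at htn
    push_neg at htn
    rcases Classical.em (T.Reaches y' t) with hre | hre
    · by_contra h0
      have hadj : T.Adj w t := Nat.pos_of_ne_zero h0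
      rcases C.reach_y'_step w t hadj hre with h | ⟨rfl, rfl⟩
      · exact hwre h
      · exact hwx rfl
    · have htx : t = x := htn htT hre
      subst htx
      exact C.mult_into_x w hwr

lemma f1_inDeg : ∀ w ∈ (f1del T r x y y').verts, w ≠ r →
    (f1del T r x y y').inDeg w = T.inDeg w := by
  intro w hw hwr
  obtain ⟨hwT, hwre, hwx⟩ := C.f1_mem.mp hw
  have hwy' : w ≠ y' := by
    rintro rfl
    exact hwre Relation.ReflTransGen.refl
  by_cases hwy : w = y
  · rw [hwy]
    have h2 : T.inDeg y = 1 := C.inDeg_one y C.y_mem C.y_ne_r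
    rw [h2]
    show (∑ s ∈ (f1del T r x y y').verts, (f1del T r x y y').mult s y) = 1
    rw [Finset.sum_eq_single_of_mem r (C.f1_r_mem)]
    · exact C.f1_mult_ry
    · intro s hs hsr
      obtain ⟨_, hsre, hsx⟩ := C.f1_mem.mp hs
      rw [C.f1_mult_eq hsr hsx C.y_ne_x hsre C.not_reach_y'_y]
      exact C.mult_into_y s hsx
  · have h1 : (f1del T r x y y').inDeg w
        = ∑ s ∈ (f1del T r x y y').verts, T.mult s w := by
      apply Finset.sum_congr rfl
      intro s hs
      obtain ⟨_, hsre, hsx⟩ := C.f1_mem.mp hs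
      exact C.f1_mult_eq' hwy hsx hwx hsre hwre
    rw [h1]
    apply Finset.sum_subset
    · intro s hs
      exact (C.f1_mem.mp hs).1
    · intro s hsT hsn
      rw [C.f1_mem] at hsn
      push_neg at hsn
      rcases Classical.em (T.Reaches y' s) with hre | hre
      · by_contra h0
        exact hwre (Relation.ReflTransGen.tail hre (Nat.pos_of_ne_zero h0))
      · have hsx : s = x := hsn hsT hre
        subst hsx
        exact C.x_children.2.2 w hwy hwy'

lemma f1_inDeg_r : (f1del T r x y y').inDeg r = 0 := by
  apply Finset.sum_eq_zero
  intro s hs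
  obtain ⟨_, hsre, hsx⟩ := C.f1_mem.mp hs
  have hry : r ≠ y := C.y_ne_r.symm
  rw [C.f1_mult_eq' hry hsx C.x_ne_r.symm hsre C.not_reach_y'_r]
  exact C.mult_into_r s

lemma f1_leaf_iff : ∀ w, (f1del T r x y y').IsLeafNode w ↔
    (w ∈ (f1del T r x y y').verts ∧ T.IsLeafNode w) := by
  intro w
  constructor
  · rintro ⟨hmem, hin, hout⟩
    have hwr : w ≠ r := by
      rintro rfl
      rw [C.f1_inDeg_r] at hin
      omega
    refine ⟨hmem, (C.f1_mem.mp hmem).1, ?_, ?_⟩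
    · rw [← C.f1_inDeg w hmem hwr]; exact hin
    · rw [← C.f1_outDeg w hmem hwr]; exact hout
  · rintro ⟨hmem, hT, hin, hout⟩
    have hwr : w ≠ r := by
      rintro rfl
      rw [C.hroot.2.1] at hin
      omega
    exact ⟨hmem, by rw [C.f1_inDeg w hmem hwr]; exact hin,
      by rw [C.f1_outDeg w hmem hwr]; exact hout⟩

end F1Ctx

end DG


namespace DG

lemma label_none_of_not_leaf {B : DG} (hL : B.LabelsOnLeaves) {w : ℕ}
    (h : ¬ B.IsLeafNode w) : B.label w = none := by
  cases h' : B.label w with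
  | none => rfl
  | some z => exact absurd ((hL w).mp ⟨z, h'⟩) h

lemma le_inDeg_of_mult {G : DG} {q w : ℕ} (hq : q ∈ G.verts) :
    G.mult q w ≤ G.inDeg w :=
  le_sum_of_mem (s := G.verts) (f := fun p => G.mult p w) hq

lemma le_outDeg_of_mult {G : DG} {w t : ℕ} (ht : t ∈ G.verts) :
    G.mult w t ≤ G.outDeg w :=
  le_sum_of_mem (s := G.verts) (f := fun p => G.mult w p) ht

/-- All the structural facts about a bead `(u,v)` below the root `r`,
with `a` the child of `v`. -/
structure BeadData (B : DG) (r u v a : ℕ) : Prop where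
  hr : B.IsRoot r
  u_mem : u ∈ B.verts
  v_mem : v ∈ B.verts
  a_mem : a ∈ B.verts
  into_r : ∀ q, B.mult q r = 0
  mru : B.mult r u = 1
  r_out : ∀ t, t ≠ u → B.mult r t = 0
  in_u : B.inDeg u = 1
  out_u : B.outDeg u = 2
  into_u : ∀ q, q ≠ r → B.mult q u = 0
  muv : B.mult u v = 2
  u_out : ∀ t, t ≠ v → B.mult u t = 0
  in_v : B.inDeg v = 2
  out_v : B.outDeg v = 1
  into_v : ∀ q, q ≠ u → B.mult q v = 0
  mva : B.mult v a = 1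
  v_out : ∀ t, t ≠ a → B.mult v t = 0
  in_a : B.inDeg a = 1
  into_a : ∀ q, q ≠ v → B.mult q a = 0
  ne_ru : r ≠ u
  ne_rv : r ≠ v
  ne_ra : r ≠ a
  ne_uv : u ≠ v
  ne_ua : u ≠ a
  ne_va : v ≠ a

lemma BeadData.r_mem {B : DG} {r u v a : ℕ} (D : BeadData B r u v a) : r ∈ B.verts :=
  D.hr.1

lemma bead_data_of {X : Finset ℕ} {B : DG} (hB : B.IsBeadedTree X)
    (hbr : B.HasBeadAtRoot) : ∃ r u v a, BeadData B r u v a := by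
  obtain ⟨r, u, v, hr, hru, huv⟩ := hbr
  have hN := hB.1
  have hS := hN.supported
  have hA := hN.acyclic
  have into_r : ∀ q, B.mult q r = 0 := inDeg_zero_all hS hr.2.1
  have hrupos : 0 < B.mult r u := hru
  have r_mem : r ∈ B.verts := hr.1
  have u_mem : u ∈ B.verts := (hS r u hru).2
  have huvpos : 0 < B.mult u v := by omega
  have v_mem : v ∈ B.verts := (hS u v huvpos).2
  have ne_ru : r ≠ u := by
    rintro rfl
    have := into_r r
    omega
  have in_u_ge : 1 ≤ B.inDeg u := le_trans (by omega) (le_inDeg_of_mult r_mem)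
  have out_u_ge : 2 ≤ B.outDeg u := le_trans (by omega) (le_outDeg_of_mult v_mem)
  have hu_class : B.inDeg u = 1 ∧ B.outDeg u = 2 := by
    rcases hN.nodes u u_mem with h | h | h | h
    · exact absurd h.2.1 (by omega)
    · exact ⟨h.2.1, h.2.2⟩
    · exact absurd h.2.2 (by omega)
    · exact absurd h.2.2 (by omega)
  have in_u := hu_class.1
  have out_u := hu_class.2
  have mru : B.mult r u = 1 := le_antisymm (in_u ▸ le_inDeg_of_mult r_mem) hrupos
  have r_out : ∀ t, t ≠ u → B.mult r t = 0 :=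
    outDeg_concentrated hS u_mem hr.2.2 (by omega)
  have into_u : ∀ q, q ≠ r → B.mult q u = 0 :=
    inDeg_concentrated hS r_mem in_u (by omega)
  have u_out : ∀ t, t ≠ v → B.mult u t = 0 :=
    outDeg_concentrated hS v_mem out_u (by omega)
  have in_v_ge : 2 ≤ B.inDeg v := le_trans (by omega) (le_inDeg_of_mult u_mem)
  have hv_class : B.inDeg v = 2 ∧ B.outDeg v = 1 := by
    rcases hN.nodes v v_mem with h | h | h | h
    · exact absurd h.2.1 (by omega)
    · exact absurd h.2.1 (by omega)
    · exact ⟨h.2.1, h.2.2⟩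
    · exact absurd h.2.1 (by omega)
  have into_v : ∀ q, q ≠ u → B.mult q v = 0 :=
    inDeg_concentrated hS u_mem hv_class.1 (by omega)
  obtain ⟨a, mva, v_out⟩ := outDeg_one_unique hS hv_class.2
  have a_mem : a ∈ B.verts := (hS v a (adj_iff.mpr (by omega))).2
  have ne_va : v ≠ a := by
    rintro rfl
    exact hA v (Relation.TransGen.single (adj_iff.mpr (by omega)))
  have in_a : B.inDeg a = 1 := by
    have ge1 : 1 ≤ B.inDeg a := le_trans (by omega) (le_inDeg_of_mult v_mem)
    rcases hN.nodes a a_mem with h | h | h | h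
    · exact absurd h.2.1 (by omega)
    · exact h.2.1
    · exfalso
      obtain ⟨p, hp⟩ := hB.2 a a_mem h.2.1
      have hpv : p ≠ v := by
        rintro rfl
        omega
      have p_mem : p ∈ B.verts := (hS p a (adj_iff.mpr (by omega))).1
      have h1 : B.mult v a + ∑ q ∈ B.verts.erase v, B.mult q a
          = ∑ q ∈ B.verts, B.mult q a :=
        Finset.add_sum_erase _ (fun q => B.mult q a) v_mem
      have h1' : (∑ q ∈ B.verts, B.mult q a) = B.inDeg a := rfl

      have h2 : B.mult p a ≤ ∑ q ∈ B.verts.erase v, B.mult q a :=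
        le_sum_of_mem (s := B.verts.erase v) (f := fun q => B.mult q a)
          (Finset.mem_erase.mpr ⟨hpv, p_mem⟩)
      have h3 := h.2.1
      omega
    · exact h.2.1
  have into_a : ∀ q, q ≠ v → B.mult q a = 0 :=
    inDeg_concentrated hS v_mem in_a (by omega)
  have ne_uv : u ≠ v := by
    rintro rfl
    exact hA u (Relation.TransGen.single (adj_iff.mpr (by omega)))
  have ne_rv : r ≠ v := by
    rintro rfl
    have := hr.2.1
    omega
  have ne_ra : r ≠ a := by
    rintro rfl
    have := hr.2.1
    omega
  have ne_ua : u ≠ a := by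
    rintro rfl
    have hvr : v ≠ r := fun h => ne_rv h.symm
    have := into_u v hvr
    omega
  exact ⟨r, u, v, a, hr, u_mem, v_mem, a_mem, into_r, mru, r_out, in_u, out_u, into_u,
    huv, u_out, hv_class.1, hv_class.2, into_v, mva, v_out, in_a, into_a,
    ne_ru, ne_rv, ne_ra, ne_uv, ne_ua, ne_va⟩

/-- Remove the bead `(u,v)` below the root, reconnecting `r` directly to `a`. -/
noncomputable def delBead (B : DG) (r u v a : ℕ) : DG where
  verts := (B.verts.erase u).erase v
  mult := fun s t =>
    if s = r ∧ t = a then 1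
    else if s = u ∨ s = v ∨ t = u ∨ t = v then 0
    else B.mult s t
  label := fun w => if w = u ∨ w = v then none else B.label w

namespace BeadData

variable {B : DG} {r u v a : ℕ} (D : BeadData B r u v a)
include D

lemma db_mem {w : ℕ} : w ∈ (delBead B r u v a).verts ↔
    (w ∈ B.verts ∧ w ≠ u ∧ w ≠ v) := by
  simp only [delBead, Finset.mem_erase]
  tauto

lemma db_r_mem : r ∈ (delBead B r u v a).verts :=
  D.db_mem.mpr ⟨D.r_mem, D.ne_ru, D.ne_rv⟩

lemma db_a_mem : a ∈ (delBead B r u v a).verts :=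
  D.db_mem.mpr ⟨D.a_mem, fun h => D.ne_ua h.symm, fun h => D.ne_va h.symm⟩

lemma db_mult_eq {s t : ℕ} (hsu : s ≠ u) (hsv : s ≠ v) (htu : t ≠ u) (htv : t ≠ v)
    (hra : ¬ (s = r ∧ t = a)) :
    (delBead B r u v a).mult s t = B.mult s t := by
  simp [delBead, hsu, hsv, htu, htv, hra]

lemma db_mult_ra : (delBead B r u v a).mult r a = 1 := by
  simp [delBead]

omit D in
lemma db_label {w : ℕ} (hwu : w ≠ u) (hwv : w ≠ v) :
    (delBead B r u v a).label w = B.label w := by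
  simp [delBead, hwu, hwv]

lemma db_inDeg : ∀ w ∈ (delBead B r u v a).verts,
    (delBead B r u v a).inDeg w = B.inDeg w := by
  intro w hw
  obtain ⟨hwB, hwu, hwv⟩ := D.db_mem.mp hw
  by_cases hwa : w = a
  · rw [hwa, D.in_a]
    show (∑ s ∈ (delBead B r u v a).verts, (delBead B r u v a).mult s a) = 1
    rw [Finset.sum_eq_single_of_mem r D.db_r_mem]
    · exact D.db_mult_ra
    · intro s hs hsr
      obtain ⟨hsB, hsu, hsv⟩ := D.db_mem.mp hs
      rw [D.db_mult_eq hsu hsv (fun h => D.ne_ua h.symm) (fun h => D.ne_va h.symm) (by tauto)]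
      exact D.into_a s hsv
  · have h1 : (delBead B r u v a).inDeg w
        = ∑ s ∈ (delBead B r u v a).verts, B.mult s w := by
      apply Finset.sum_congr rfl
      intro s hs
      obtain ⟨hsB, hsu, hsv⟩ := D.db_mem.mp hs
      exact D.db_mult_eq hsu hsv hwu hwv (by tauto)
    rw [h1]
    apply Finset.sum_subset
    · intro s hs
      exact (D.db_mem.mp hs).1
    · intro s hsB hsn
      rw [D.db_mem] at hsn
      push_neg at hsn
      rcases Classical.em (s = u) with rfl | hsu
      · exact D.u_out w hwv
      · have : s = v := by tauto
        subst this
        exact D.v_out w hwa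

lemma db_outDeg : ∀ w ∈ (delBead B r u v a).verts,
    (delBead B r u v a).outDeg w = B.outDeg w := by
  intro w hw
  obtain ⟨hwB, hwu, hwv⟩ := D.db_mem.mp hw
  by_cases hwr : w = r
  · rw [hwr, D.hr.2.2]
    show (∑ t ∈ (delBead B r u v a).verts, (delBead B r u v a).mult r t) = 1
    rw [Finset.sum_eq_single_of_mem a D.db_a_mem]
    · exact D.db_mult_ra
    · intro t ht hta
      obtain ⟨htB, htu, htv⟩ := D.db_mem.mp ht
      rw [D.db_mult_eq D.ne_ru D.ne_rv htu htv (by tauto)]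
      exact D.r_out t htu
  · have h1 : (delBead B r u v a).outDeg w
        = ∑ t ∈ (delBead B r u v a).verts, B.mult w t := by
      apply Finset.sum_congr rfl
      intro t ht
      obtain ⟨htB, htu, htv⟩ := D.db_mem.mp ht
      exact D.db_mult_eq hwu hwv htu htv (by tauto)
    rw [h1]
    apply Finset.sum_subset
    · intro t ht
      exact (D.db_mem.mp ht).1
    · intro t htB htn
      rw [D.db_mem] at htn
      push_neg at htn
      rcases Classical.em (t = u) with rfl | htu
      · exact D.into_u w hwr
      · have : t = v := by tauto
        subst this
        exact D.into_v w hwu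

lemma db_supported (hS : B.Supported) : (delBead B r u v a).Supported := by
  intro s t hadj
  rw [adj_iff] at hadj
  by_cases hra : s = r ∧ t = a
  · obtain ⟨rfl, rfl⟩ := hra
    exact ⟨D.db_r_mem, D.db_a_mem⟩
  · by_cases h2 : s = u ∨ s = v ∨ t = u ∨ t = v
    · rw [show (delBead B r u v a).mult s t = 0 by simp [delBead, hra, h2]] at hadj
      omega
    · push_neg at h2
      have hm : (delBead B r u v a).mult s t = B.mult s t :=
        D.db_mult_eq h2.1 h2.2.1 h2.2.2.1 h2.2.2.2 hra
      rw [hm] at hadj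
      have := hS s t hadj
      exact ⟨D.db_mem.mpr ⟨this.1, h2.1, h2.2.1⟩, D.db_mem.mpr ⟨this.2, h2.2.2.1, h2.2.2.2⟩⟩

lemma db_adj_cases {s t : ℕ} (h : (delBead B r u v a).Adj s t) :
    (s = r ∧ t = a) ∨ (B.Adj s t ∧ s ≠ u ∧ s ≠ v ∧ t ≠ u ∧ t ≠ v) := by
  rw [adj_iff] at h
  by_cases hra : s = r ∧ t = a
  · exact Or.inl hra
  · by_cases h2 : s = u ∨ s = v ∨ t = u ∨ t = v
    · rw [show (delBead B r u v a).mult s t = 0 by simp [delBead, hra, h2]] at h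
      omega
    · push_neg at h2
      rw [D.db_mult_eq h2.1 h2.2.1 h2.2.2.1 h2.2.2.2 hra] at h
      exact Or.inr ⟨h, h2⟩

lemma db_acyclic (hA : B.Acyclic) (hS : B.Supported) : (delBead B r u v a).Acyclic := by
  apply acyclic_of_rank (B.rnk)
  intro s t hadj
  rcases D.db_adj_cases hadj with ⟨hsr, hta⟩ | ⟨hadj', _⟩
  · rw [hsr, hta]
    apply rnk_lt_of_sreaches hA hS
    have h1 : B.Adj r u := adj_iff.mpr (by have := D.mru; omega)
    have h2 : B.Adj u v := adj_iff.mpr (by have := D.muv; omega)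
    have h3 : B.Adj v a := adj_iff.mpr (by have := D.mva; omega)
    exact Relation.TransGen.head h1 (Relation.TransGen.head h2 (Relation.TransGen.single h3))
  · exact rnk_lt hA hS hadj'

lemma db_u_not_leaf : ¬ B.IsLeafNode u := by
  intro h
  have := D.out_u
  have := h.2.2
  omega

lemma db_v_not_leaf : ¬ B.IsLeafNode v := by
  intro h
  have := D.in_v
  have := h.2.1
  omega

/-- The main structural result: `delBead` is again a beaded tree. -/
lemma db_beaded {X : Finset ℕ} (hB : B.IsBeadedTree X) :
    (delBead B r u v a).IsBeadedTree X := by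
  have hN := hB.1
  have hS := hN.supported
  have hA := hN.acyclic
  have root_eq : ∀ w, B.IsRoot w → w = r := by
    intro w hw
    obtain ⟨r0, hr0, hu⟩ := hN.root
    rw [hu w hw, hu r D.hr]
  have hlabel_u : B.label u = none := label_none_of_not_leaf hN.labels D.db_u_not_leaf
  have hlabel_v : B.label v = none := label_none_of_not_leaf hN.labels D.db_v_not_leaf
  constructor
  · constructor
    · -- root
      refine ⟨r, ⟨D.db_r_mem, ?_, ?_⟩, ?_⟩
      · rw [D.db_inDeg r D.db_r_mem]; exact D.hr.2.1
      · rw [D.db_outDeg r D.db_r_mem]; exact D.hr.2.2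
      · intro w hw
        have hwB : w ∈ B.verts := (D.db_mem.mp hw.1).1
        have : B.IsRoot w := ⟨hwB, by rw [← D.db_inDeg w hw.1]; exact hw.2.1,
          by rw [← D.db_outDeg w hw.1]; exact hw.2.2⟩
        exact root_eq w this
    · -- nodes
      intro w hw
      have hwB : w ∈ B.verts := (D.db_mem.mp hw).1
      have hin := D.db_inDeg w hw
      have hout := D.db_outDeg w hw
      rcases hN.nodes w hwB with ⟨-, h1, h2⟩ | ⟨-, h1, h2⟩ | ⟨-, h1, h2⟩ | ⟨-, h1, h2⟩
      · exact Or.inl ⟨hw, by omega, by omega⟩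
      · exact Or.inr (Or.inl ⟨hw, by omega, by omega⟩)
      · exact Or.inr (Or.inr (Or.inl ⟨hw, by omega, by omega⟩))
      · exact Or.inr (Or.inr (Or.inr ⟨hw, by omega, by omega⟩))
    · exact D.db_acyclic hA hS
    · exact D.db_supported hS
    · -- labels
      intro w
      by_cases hwu : w = u
      · subst hwu
        constructor
        · rintro ⟨z, hz⟩
          simp [delBead] at hz
        · rintro ⟨hmem, _⟩
          exact absurd (D.db_mem.mp hmem).2.1 (by simp)
      · by_cases hwv : w = v
        · subst hwv
          constructor
          · rintro ⟨z, hz⟩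
            simp [delBead] at hz
          · rintro ⟨hmem, _⟩
            exact absurd (D.db_mem.mp hmem).2.2 (by simp)
        · rw [db_label hwu hwv]
          constructor
          · intro hz
            have hleaf := (hN.labels w).mp hz
            have hw' : w ∈ (delBead B r u v a).verts := D.db_mem.mpr ⟨hleaf.1, hwu, hwv⟩
            exact ⟨hw', by rw [D.db_inDeg w hw']; exact hleaf.2.1,
              by rw [D.db_outDeg w hw']; exact hleaf.2.2⟩
          · intro hleaf
            apply (hN.labels w).mpr
            exact ⟨(D.db_mem.mp hleaf.1).1, by rw [← D.db_inDeg w hleaf.1]; exact hleaf.2.1,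
              by rw [← D.db_outDeg w hleaf.1]; exact hleaf.2.2⟩
    · -- labelsSub
      intro w z hw
      by_cases hwu : w = u
      · subst hwu; simp [delBead] at hw
      · by_cases hwv : w = v
        · subst hwv; simp [delBead] at hw
        · exact hN.labelsSub w z (by rwa [db_label hwu hwv] at hw)
    · -- labelsOnto
      intro z hz
      obtain ⟨w, hw, huniq⟩ := hN.labelsOnto z hz
      have hwu : w ≠ u := by
        rintro rfl
        rw [hlabel_u] at hw
        cases hw
      have hwv : w ≠ v := by
        rintro rfl
        rw [hlabel_v] at hw
        cases hw
      refine ⟨w, ?_, ?_⟩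
      · show (delBead B r u v a).label w = some z
        rwa [db_label hwu hwv]
      intro w' hw'
      have hw2 : (delBead B r u v a).label w' = some z := hw'
      by_cases hwu' : w' = u
      · exfalso; rw [hwu'] at hw2; simp [delBead] at hw2
      · by_cases hwv' : w' = v
        · exfalso; rw [hwv'] at hw2; simp [delBead] at hw2
        · exact huniq w' (by rwa [db_label hwu' hwv'] at hw2)
  · -- beaded
    intro w hw hin
    have hwB : w ∈ B.verts := (D.db_mem.mp hw).1
    obtain ⟨hwB', hwu, hwv⟩ := D.db_mem.mp hw
    have hinB : B.inDeg w = 2 := by rw [← D.db_inDeg w hw]; exact hin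
    obtain ⟨p, hp⟩ := hB.2 w hwB hinB
    have hpu : p ≠ u := by
      rintro rfl
      have := D.u_out w hwv
      omega
    have hpv : p ≠ v := by
      rintro rfl
      have := D.v_out w (by rintro rfl; have := D.in_a; omega)
      omega
    have hwa : w ≠ a := by
      rintro rfl
      have := D.in_a
      omega
    refine ⟨p, ?_⟩
    rw [D.db_mult_eq hpu hpv hwu hwv (by tauto)]
    exact hp

lemma db_reticNum {X : Finset ℕ} (hB : B.IsBeadedTree X) :
    (delBead B r u v a).reticNum + 1 = B.reticNum := by
  have key : (delBead B r u v a).verts.filter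
        (fun w => (delBead B r u v a).inDeg w = 2 ∧ (delBead B r u v a).outDeg w = 1)
      = ((B.verts.filter (fun w => B.inDeg w = 2 ∧ B.outDeg w = 1)).erase u).erase v := by
    ext w
    simp only [Finset.mem_filter, Finset.mem_erase]
    constructor
    · intro ⟨hw, h2⟩
      obtain ⟨hwB, hwu, hwv⟩ := D.db_mem.mp hw
      exact ⟨hwv, hwu, hwB, by rw [← D.db_inDeg w hw]; exact h2.1,
        by rw [← D.db_outDeg w hw]; exact h2.2⟩
    · intro ⟨hwv, hwu, hwB, h2, h3⟩
      have hw : w ∈ (delBead B r u v a).verts := D.db_mem.mpr ⟨hwB, hwu, hwv⟩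
      exact ⟨hw, by rw [D.db_inDeg w hw]; exact h2, by rw [D.db_outDeg w hw]; exact h3⟩
  have hu_not : u ∉ B.verts.filter (fun w => B.inDeg w = 2 ∧ B.outDeg w = 1) := by
    simp only [Finset.mem_filter]
    intro ⟨_, h2, _⟩
    have := D.in_u
    omega
  have hv_in : v ∈ (B.verts.filter (fun w => B.inDeg w = 2 ∧ B.outDeg w = 1)).erase u := by
    rw [Finset.mem_erase]
    exact ⟨fun h => D.ne_uv h.symm, Finset.mem_filter.mpr ⟨D.v_mem, D.in_v, D.out_v⟩⟩
  show ((delBead B r u v a).verts.filter _).card + 1 = _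
  rw [key, Finset.card_erase_of_mem hv_in, Finset.erase_eq_of_notMem hu_not]
  have hv_in' : v ∈ B.verts.filter (fun w => B.inDeg w = 2 ∧ B.outDeg w = 1) :=
    Finset.mem_filter.mpr ⟨D.v_mem, D.in_v, D.out_v⟩
  have : 0 < (B.verts.filter (fun w => B.inDeg w = 2 ∧ B.outDeg w = 1)).card :=
    Finset.card_pos.mpr ⟨v, hv_in'⟩
  show _ = (B.verts.filter _).card
  omega

end BeadData

end DG


namespace DG

lemma two_children {G : DG} (hS : G.Supported) (hsimp : ∀ u v, G.mult u v ≤ 1)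
    {w : ℕ} (hout : G.outDeg w = 2) : ∃ c c', c ≠ c' ∧ G.Adj w c ∧ G.Adj w c' := by
  have h0 : 0 < ∑ t ∈ G.verts, G.mult w t := by
    have : (∑ t ∈ G.verts, G.mult w t) = 2 := hout
    omega
  obtain ⟨c, hc, hcpos⟩ := sum_pos_exists h0
  have h1 : G.mult w c + ∑ t ∈ G.verts.erase c, G.mult w t = ∑ t ∈ G.verts, G.mult w t :=
    Finset.add_sum_erase _ (fun t => G.mult w t) hc
  have hle := hsimp w c
  have hsum2 : (∑ t ∈ G.verts, G.mult w t) = 2 := hout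
  have h2 : 0 < ∑ t ∈ G.verts.erase c, G.mult w t := by omega
  obtain ⟨c', hc', hcpos'⟩ := sum_pos_exists h2
  exact ⟨c', c, (Finset.mem_erase.mp hc').1, hcpos', hcpos⟩

/-- Transfer of a walk of `B` avoiding `r`, `u`, `v` to `delBead B r u v a`. -/
lemma BeadData.db_lift_walk {B : DG} {r u v a : ℕ} (D : BeadData B r u v a)
    {p : List Arc} {s t : ℕ} (hw : B.IsWalk p s t)
    (hsafe : ∀ e ∈ p, (e.1 ≠ r ∧ e.1 ≠ u ∧ e.1 ≠ v) ∧ (e.2.1 ≠ u ∧ e.2.1 ≠ v)) :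
    (delBead B r u v a).IsWalk p s t := by
  obtain ⟨hne, hok, hch, hh, hl⟩ := hw
  refine ⟨hne, ?_, hch, hh, hl⟩
  intro e he
  have hs := hsafe e he
  show e.2.2 < (delBead B r u v a).mult e.1 e.2.1
  rw [D.db_mult_eq hs.1.2.1 hs.1.2.2 hs.2.1 hs.2.2 (by tauto)]
  exact hok e he

/-- The key transfer: if `B` (with its root bead) weakly displays `T`, then
`delBead B r u v a` weakly displays `f1del T rT x y y'`. -/
lemma forward_displays {X : Finset ℕ} {B T : DG} {r u v a rT x y y' : ℕ}
    (hB : B.IsBeadedTree X) (D : BeadData B r u v a)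
    (C : F1Ctx X T rT x y y') (hdisp : B.Displays T) :
    (delBead B r u v a).Displays (f1del T rT x y y') := by
  obtain ⟨h, hE, hmemb, hleaf, hwalk, hdiv⟩ := hdisp
  have hS := hB.1.supported
  have hA := hB.1.acyclic
  have hSP := C.hS
  set bad : ℕ → Prop := fun w => w = r ∨ w = u ∨ w = v with hbad
  have hcl : ∀ q w, B.Adj q w → bad w → bad q := by
    intro q w hqw hw
    rw [adj_iff] at hqw
    rcases hw with rfl | rfl | rfl
    · exact absurd (D.into_r q) (by omega)
    · left
      by_contra hqr
      exact absurd (D.into_u q hqr) (by omega)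
    · right; left
      by_contra hqu
      exact absurd (D.into_v q hqu) (by omega)
  have sr := single_arc_of (N := B) D.mru D.r_out
  have sv := single_arc_of (N := B) D.mva D.v_out
  have hemb : WeakEmbedding T B h hE := ⟨hmemb, hleaf, hwalk, hdiv⟩
  have not_bad_leaf : ∀ w, B.IsLeafNode w → ¬ bad w := by
    rintro w ⟨hwm, hwi, hwo⟩ (rfl | rfl | rfl)
    · have := D.hr.2.1; omega
    · have := D.out_u; omega
    · have := D.in_v; omega
  have hnotroot : ∀ w ∈ T.verts, w ≠ rT → h w ≠ r := by
    intro w hw hwr heq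
    obtain ⟨p, hp1, _⟩ := inDeg_one_unique hSP (C.inDeg_one w hw hwr)
    have hadj : T.Adj p w := adj_iff.mpr (by omega)
    obtain ⟨q, hq⟩ := walk_target_adj' (hwalk p w hadj)
    rw [heq] at hq
    exact absurd (D.into_r q) (by omega)
  -- the case of a child of x
  have hcase : ∀ w ∈ T.verts, w ≠ rT → w ≠ x → T.Adj x w → ¬ bad (h w) := by
    intro w hw hwr hwx hadj
    by_cases hbx : bad (h x)
    · rcases hbx with hxr | hxu | hxv
      · exact absurd (no_branch_at hemb C.hxy C.hxy' C.hyy' hxr sr) id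
      · -- h x = u : use the type of w
        rcases C.mt.nodes w hw with hcls | hcls | hcls
        · exact absurd (C.root_eq w hcls) hwr
        · obtain ⟨c, c', hcc, hc, hc'⟩ := two_children hSP C.mt.simple hcls.2.2
          rintro (hwr' | hwu' | hwv')
          · exact hnotroot w hw hwr hwr'
          · -- walk from u to u
            have hwlk := hwalk x w hadj
            rw [hxu, hwu'] at hwlk
            exact hA u (isWalk_sreaches hwlk)
          · exact no_branch_at hemb hc hc' hcc hwv' sv
        · exact not_bad_leaf _ ((hleaf w hcls).1)
      · exact absurd (no_branch_at hemb C.hxy C.hxy' C.hyy' hxv sv) id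
    · exact walk_avoid_target bad hcl (hwalk x w hadj) hbx
  have main : ∀ n w, T.rnk w ≤ n → w ∈ T.verts → w ≠ rT → w ≠ x → ¬ bad (h w) := by
    intro n
    induction n with
    | zero =>
      intro w hrk hw hwr hwx
      obtain ⟨p, hp1, _⟩ := inDeg_one_unique hSP (C.inDeg_one w hw hwr)
      have hadj : T.Adj p w := adj_iff.mpr (by omega)
      by_cases hpx : p = x
      · subst hpx; exact hcase w hw hwr hwx hadj
      · by_cases hpr : p = rT
        · subst hpr
          have := C.r_child.2 w hwx
          omega
        · have := rnk_lt C.hA hSP hadj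
          omega
    | succ n ih =>
      intro w hrk hw hwr hwx
      obtain ⟨p, hp1, _⟩ := inDeg_one_unique hSP (C.inDeg_one w hw hwr)
      have hadj : T.Adj p w := adj_iff.mpr (by omega)
      by_cases hpx : p = x
      · subst hpx; exact hcase w hw hwr hwx hadj
      · by_cases hpr : p = rT
        · subst hpr
          have := C.r_child.2 w hwx
          omega
        · have hrnk := rnk_lt C.hA hSP hadj
          have hpmem : p ∈ T.verts := (hSP p w hadj).1
          have hbp : ¬ bad (h p) := ih p (by omega) hpmem hpr hpx
          exact walk_avoid_target bad hcl (hwalk p w hadj) hbp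
  have mainw : ∀ w ∈ T.verts, w ≠ rT → w ≠ x → ¬ bad (h w) := by
    intro w hw hwr hwx
    exact main (T.rnk w) w (le_refl _) hw hwr hwx
  -- the walk for the root edge of the f1del tree
  have hB' := D.db_beaded hB
  have hroot' : (delBead B r u v a).IsRoot r := by
    refine ⟨D.db_r_mem, ?_, ?_⟩
    · rw [D.db_inDeg r D.db_r_mem]; exact D.hr.2.1
    · rw [D.db_outDeg r D.db_r_mem]; exact D.hr.2.2
  have hroot'_eq : ∀ w, (delBead B r u v a).IsRoot w → w = r := by
    intro w hw
    obtain ⟨r0, hr0, hu⟩ := hB'.1.root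
    rw [hu w hw, hu r hroot']
  have hin' : ∀ w ∈ (delBead B r u v a).verts, w ≠ r → 0 < (delBead B r u v a).inDeg w := by
    intro w hw hwr
    rcases hB'.1.nodes w hw with hcls | hcls | hcls | hcls
    · exact absurd (hroot'_eq w hcls) hwr
    · rw [hcls.2.1]; omega
    · rw [hcls.2.1]; omega
    · rw [hcls.2.1]; omega
  have hbady : ¬ bad (h y) := mainw y C.y_mem C.y_ne_r C.y_ne_x
  have hymem' : h y ∈ (delBead B r u v a).verts := by
    refine D.db_mem.mpr ⟨hmemb y C.y_mem, ?_, ?_⟩ <;> tauto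
  have hyr : h y ≠ r := by tauto
  obtain ⟨W0, hW0⟩ := reach_walk
    (root_reach hB'.1.acyclic hB'.1.supported r hin' (h y) hymem' hyr)
  -- lifting of walks for kept edges
  have lift : ∀ s t, T.Adj s t → ¬ bad (h s) → (delBead B r u v a).IsWalk (hE s t) (h s) (h t) := by
    intro s t hadj hbs
    apply D.db_lift_walk (hwalk s t hadj)
    intro e he
    have h1 := walk_avoid bad hcl (hwalk s t hadj) hbs e he
    constructor
    · constructor
      · intro hr0; exact h1.1 (Or.inl hr0)
      constructor
      · intro hr0; exact h1.1 (Or.inr (Or.inl hr0))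
      · intro hr0; exact h1.1 (Or.inr (Or.inr hr0))
    · constructor
      · intro hr0; exact h1.2 (Or.inr (Or.inl hr0))
      · intro hr0; exact h1.2 (Or.inr (Or.inr hr0))
  -- now build the embedding
  refine ⟨fun w => if w = rT then r else h w,
    fun s t => if s = rT then W0 else hE s t, ?_, ?_, ?_, ?_⟩
  · -- vertices
    intro w hw
    show (if w = rT then r else h w) ∈ (delBead B r u v a).verts
    by_cases hwr : w = rT
    · rw [if_pos hwr]; exact D.db_r_mem
    · rw [if_neg hwr]
      obtain ⟨hwT, hwre, hwx⟩ := C.f1_mem.mp hw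
      have hb := mainw w hwT hwr hwx
      refine D.db_mem.mpr ⟨hmemb w hwT, ?_, ?_⟩ <;> tauto
  · -- leaves
    intro w hlf
    obtain ⟨hw1, hTleaf⟩ := (C.f1_leaf_iff w).mp hlf
    obtain ⟨hwT, hwre, hwx⟩ := C.f1_mem.mp hw1
    have hwr : w ≠ rT := by
      rintro rfl
      have := C.hroot.2.1
      have := hTleaf.2.1
      omega
    show (delBead B r u v a).IsLeafNode (if w = rT then r else h w) ∧
      (delBead B r u v a).label (if w = rT then r else h w) = (f1del T rT x y y').label w
    rw [if_neg hwr]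
    obtain ⟨hBleaf, hBlabel⟩ := hleaf w hTleaf
    have hb : ¬ bad (h w) := not_bad_leaf _ hBleaf
    have hmem' : h w ∈ (delBead B r u v a).verts := by
      refine D.db_mem.mpr ⟨hBleaf.1, ?_, ?_⟩ <;> tauto
    constructor
    · exact ⟨hmem', by rw [D.db_inDeg _ hmem']; exact hBleaf.2.1,
        by rw [D.db_outDeg _ hmem']; exact hBleaf.2.2⟩
    · rw [BeadData.db_label (by tauto) (by tauto), C.f1_label hwx hwre]
      exact hBlabel
  · -- walks
    intro s t hadj
    show (delBead B r u v a).IsWalk (if s = rT then W0 else hE s t)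
      (if s = rT then r else h s) (if t = rT then r else h t)
    rcases C.f1_adj_iff.mp hadj with ⟨hsr, hty⟩ | ⟨hTadj, hsx, htx, hsre, htre⟩
    · rw [hsr, hty, if_pos rfl, if_pos rfl, if_neg C.y_ne_r]
      exact hW0
    · have hsrT : s ≠ rT := by
        rintro rfl
        have := C.r_child.2 t htx
        rw [adj_iff] at hTadj
        omega
      have htrT : t ≠ rT := by
        rintro rfl
        have := C.mult_into_r s
        rw [adj_iff] at hTadj
        omega
      rw [if_neg hsrT, if_neg hsrT, if_neg htrT]
      exact lift s t hTadj (mainw s (hSP s t hTadj).1 hsrT hsx)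
  · -- divergence
    intro s t t' h1 h2 hne
    show (if s = rT then W0 else hE s t).head? ≠ (if s = rT then W0 else hE s t').head?
    by_cases hsr : s = rT
    · subst hsr
      rw [C.f1_adj_r h1, C.f1_adj_r h2] at hne
      exact absurd rfl hne
    · rw [if_neg hsr, if_neg hsr]
      have hT1 : T.Adj s t := by
        rcases C.f1_adj_iff.mp h1 with ⟨hsr', _⟩ | ⟨hTadj, _⟩
        · exact absurd hsr' hsr
        · exact hTadj
      have hT2 : T.Adj s t' := by
        rcases C.f1_adj_iff.mp h2 with ⟨hsr', _⟩ | ⟨hTadj, _⟩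
        · exact absurd hsr' hsr
        · exact hTadj
      exact hdiv s t t' hT1 hT2 hne

end DG


namespace DG

/-- Data for adding a bead below the root of `B'`: root `r`, its child `a`,
and fresh nodes `u`, `v`. -/
structure AddData (B' : DG) (r a u v : ℕ) : Prop where
  hr : B'.IsRoot r
  a_mem : a ∈ B'.verts
  mra : B'.mult r a = 1
  r_out : ∀ t, t ≠ a → B'.mult r t = 0
  into_r : ∀ q, B'.mult q r = 0
  ne_ra : r ≠ a
  u_new : u ∉ B'.verts
  v_new : v ∉ B'.verts
  ne_uv : u ≠ v

lemma add_data_of {X : Finset ℕ} {B' : DG} (hB' : B'.IsBeadedTree X) :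
    ∃ r a u v, AddData B' r a u v := by
  obtain ⟨r, hr, _⟩ := hB'.1.root
  obtain ⟨a, mra, r_out⟩ := outDeg_one_unique hB'.1.supported hr.2.2
  have a_mem : a ∈ B'.verts := (hB'.1.supported r a (adj_iff.mpr (by omega))).2
  have ne_ra : r ≠ a := by
    rintro rfl
    exact hB'.1.acyclic r (Relation.TransGen.single (adj_iff.mpr (by omega)))
  refine ⟨r, a, B'.verts.sup id + 1, B'.verts.sup id + 2, hr, a_mem, mra, r_out,
    inDeg_zero_all hB'.1.supported hr.2.1, ne_ra, ?_, ?_, by omega⟩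
  · intro hmem
    have h := Finset.le_sup (s := B'.verts) (f := id) hmem
    simp only [id] at h
    omega
  · intro hmem
    have h := Finset.le_sup (s := B'.verts) (f := id) hmem
    simp only [id] at h
    omega

/-- Insert a bead `(u,v)` between the root `r` and its child `a`. -/
noncomputable def addBead (B' : DG) (r a u v : ℕ) : DG where
  verts := insert u (insert v B'.verts)
  mult := fun s t =>
    if s = r ∧ t = a then 0
    else if s = r ∧ t = u then 1
    else if s = u ∧ t = v then 2
    else if s = v ∧ t = a then 1
    else if s = u ∨ s = v ∨ t = u ∨ t = v then 0
    else B'.mult s t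
  label := fun w => if w = u ∨ w = v then none else B'.label w

namespace AddData

variable {B' : DG} {r a u v : ℕ} (E : AddData B' r a u v)
include E

lemma r_mem : r ∈ B'.verts := E.hr.1
lemma ne_ru : r ≠ u := fun h => E.u_new (h ▸ E.r_mem)
lemma ne_rv : r ≠ v := fun h => E.v_new (h ▸ E.r_mem)
lemma ne_au : a ≠ u := fun h => E.u_new (h ▸ E.a_mem)
lemma ne_av : a ≠ v := fun h => E.v_new (h ▸ E.a_mem)

lemma ab_mem {w : ℕ} : w ∈ (addBead B' r a u v).verts ↔ (w = u ∨ w = v ∨ w ∈ B'.verts) := by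
  simp [addBead]

lemma ab_mem' {w : ℕ} (hw : w ∈ B'.verts) : w ∈ (addBead B' r a u v).verts :=
  E.ab_mem.mpr (Or.inr (Or.inr hw))

lemma ab_mult_eq {s t : ℕ} (hsu : s ≠ u) (hsv : s ≠ v) (htu : t ≠ u) (htv : t ≠ v)
    (hra : ¬ (s = r ∧ t = a)) :
    (addBead B' r a u v).mult s t = B'.mult s t := by
  have h2 : ¬ (s = r ∧ t = u) := by tauto
  have h3 : ¬ (s = u ∧ t = v) := by tauto
  have h4 : ¬ (s = v ∧ t = a) := by tauto
  simp [addBead, hra, h2, h3, h4, hsu, hsv, htu, htv]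

lemma ab_mult_ru : (addBead B' r a u v).mult r u = 1 := by
  have h1 : u ≠ a := E.ne_au.symm
  simp [addBead, h1]

lemma ab_mult_uv : (addBead B' r a u v).mult u v = 2 := by
  have h1 : u ≠ r := E.ne_ru.symm
  simp [addBead, h1]

lemma ab_mult_va : (addBead B' r a u v).mult v a = 1 := by
  have h1 : v ≠ r := E.ne_rv.symm
  have h2 : v ≠ u := E.ne_uv.symm
  simp [addBead, h1, h2]

lemma ab_mult_ra : (addBead B' r a u v).mult r a = 0 := by
  simp [addBead]

lemma ab_mult_u_t {t : ℕ} (ht : t ≠ v) : (addBead B' r a u v).mult u t = 0 := by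
  have h1 : u ≠ r := E.ne_ru.symm
  have h2 : u ≠ v := E.ne_uv
  simp [addBead, h1, h2, ht]

lemma ab_mult_v_t {t : ℕ} (ht : t ≠ a) : (addBead B' r a u v).mult v t = 0 := by
  have h1 : v ≠ r := E.ne_rv.symm
  have h2 : v ≠ u := E.ne_uv.symm
  simp [addBead, h1, h2, ht]

lemma ab_mult_s_u {s : ℕ} (hs : s ≠ r) : (addBead B' r a u v).mult s u = 0 := by
  have h1 : u ≠ v := E.ne_uv
  have h2 : u ≠ a := E.ne_au.symm
  simp [addBead, hs, h1, h2]

lemma ab_mult_s_v {s : ℕ} (hs : s ≠ u) : (addBead B' r a u v).mult s v = 0 := by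
  have h1 : v ≠ a := E.ne_av.symm
  have h2 : v ≠ u := E.ne_uv.symm
  simp [addBead, hs, h1, h2]

lemma ab_sum_split (f : ℕ → ℕ) :
    (∑ w ∈ (addBead B' r a u v).verts, f w) = f u + f v + ∑ w ∈ B'.verts, f w := by
  show (∑ w ∈ insert u (insert v B'.verts), f w) = _
  rw [Finset.sum_insert (by simp [E.u_new, E.ne_uv]), Finset.sum_insert E.v_new]
  omega

lemma ab_inDeg : ∀ w ∈ B'.verts, (addBead B' r a u v).inDeg w = B'.inDeg w := by
  intro w hw
  have hwu : w ≠ u := fun h => E.u_new (h ▸ hw)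
  have hwv : w ≠ v := fun h => E.v_new (h ▸ hw)
  show (∑ s ∈ (addBead B' r a u v).verts, (addBead B' r a u v).mult s w) = B'.inDeg w
  rw [ab_sum_split E (fun s => (addBead B' r a u v).mult s w)]
  by_cases hwa : w = a
  · rw [hwa, E.ab_mult_u_t E.ne_av, E.ab_mult_va]
    have h1 : (∑ s ∈ B'.verts, (addBead B' r a u v).mult s a)
        = ∑ s ∈ B'.verts, (if s = r then 0 else B'.mult s a) := by
      apply Finset.sum_congr rfl
      intro s hs
      by_cases hsr : s = r
      · rw [if_pos hsr, hsr]
        exact E.ab_mult_ra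
      · rw [if_neg hsr]
        exact E.ab_mult_eq (fun h => E.u_new (h ▸ hs)) (fun h => E.v_new (h ▸ hs))
          (fun h => E.u_new (h ▸ E.a_mem)) (fun h => E.v_new (h ▸ E.a_mem)) (by tauto)
    rw [h1]
    have h2 : B'.mult r a + ∑ s ∈ B'.verts.erase r, B'.mult s a
        = ∑ s ∈ B'.verts, B'.mult s a :=
      Finset.add_sum_erase _ (fun s => B'.mult s a) E.r_mem
    have h3 : (∑ s ∈ B'.verts, if s = r then 0 else B'.mult s a)
        = (if r = r then 0 else B'.mult r a)
          + ∑ s ∈ B'.verts.erase r, (if s = r then 0 else B'.mult s a) :=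
      (Finset.add_sum_erase _ (fun s => if s = r then 0 else B'.mult s a) E.r_mem).symm
    have h4 : (∑ s ∈ B'.verts.erase r, (if s = r then 0 else B'.mult s a))
        = ∑ s ∈ B'.verts.erase r, B'.mult s a := by
      apply Finset.sum_congr rfl
      intro s hs
      rw [if_neg (Finset.mem_erase.mp hs).1]
    have h5 : B'.inDeg a = ∑ s ∈ B'.verts, B'.mult s a := rfl
    have h6 := E.mra
    rw [h3, h4, if_pos rfl, h5]
    omega
  · rw [E.ab_mult_u_t hwv, E.ab_mult_v_t hwa]
    have h1 : (∑ s ∈ B'.verts, (addBead B' r a u v).mult s w)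
        = ∑ s ∈ B'.verts, B'.mult s w := by
      apply Finset.sum_congr rfl
      intro s hs
      exact E.ab_mult_eq (fun h => E.u_new (h ▸ hs)) (fun h => E.v_new (h ▸ hs)) hwu hwv
        (by tauto)
    rw [h1]
    have h5 : B'.inDeg w = ∑ s ∈ B'.verts, B'.mult s w := rfl
    omega

lemma ab_outDeg : ∀ w ∈ B'.verts, (addBead B' r a u v).outDeg w = B'.outDeg w := by
  intro w hw
  have hwu : w ≠ u := fun h => E.u_new (h ▸ hw)
  have hwv : w ≠ v := fun h => E.v_new (h ▸ hw)
  show (∑ t ∈ (addBead B' r a u v).verts, (addBead B' r a u v).mult w t) = B'.outDeg w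
  rw [ab_sum_split E (fun t => (addBead B' r a u v).mult w t)]
  by_cases hwr : w = r
  · rw [hwr, E.ab_mult_ru, E.ab_mult_s_v E.ne_ru]
    have h1 : (∑ t ∈ B'.verts, (addBead B' r a u v).mult r t) = 0 := by
      apply Finset.sum_eq_zero
      intro t ht
      by_cases hta : t = a
      · rw [hta]; exact E.ab_mult_ra
      · rw [E.ab_mult_eq E.ne_ru E.ne_rv (fun h => E.u_new (h ▸ ht))
          (fun h => E.v_new (h ▸ ht)) (by tauto)]
        exact E.r_out t hta
    rw [h1, E.hr.2.2]
  · rw [E.ab_mult_s_u hwr, E.ab_mult_s_v hwu]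
    have h1 : (∑ t ∈ B'.verts, (addBead B' r a u v).mult w t)
        = ∑ t ∈ B'.verts, B'.mult w t := by
      apply Finset.sum_congr rfl
      intro t ht
      exact E.ab_mult_eq hwu hwv (fun h => E.u_new (h ▸ ht)) (fun h => E.v_new (h ▸ ht))
        (by tauto)
    rw [h1]
    have h5 : B'.outDeg w = ∑ t ∈ B'.verts, B'.mult w t := rfl
    omega

lemma ab_deg_u : (addBead B' r a u v).inDeg u = 1 ∧ (addBead B' r a u v).outDeg u = 2 := by
  constructor
  · show (∑ s ∈ (addBead B' r a u v).verts, (addBead B' r a u v).mult s u) = 1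
    rw [ab_sum_split E (fun s => (addBead B' r a u v).mult s u)]
    rw [E.ab_mult_u_t E.ne_uv, E.ab_mult_v_t E.ne_au.symm]
    have h1 : (∑ s ∈ B'.verts, (addBead B' r a u v).mult s u) = 1 := by
      rw [Finset.sum_eq_single_of_mem r E.r_mem]
      · exact E.ab_mult_ru
      · intro s hs hsr
        exact E.ab_mult_s_u hsr
    omega
  · show (∑ t ∈ (addBead B' r a u v).verts, (addBead B' r a u v).mult u t) = 2
    rw [ab_sum_split E (fun t => (addBead B' r a u v).mult u t)]
    rw [E.ab_mult_u_t E.ne_uv, E.ab_mult_uv]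
    have h1 : (∑ t ∈ B'.verts, (addBead B' r a u v).mult u t) = 0 :=
      Finset.sum_eq_zero (fun t ht => E.ab_mult_u_t (fun h => E.v_new (h ▸ ht)))
    omega

lemma ab_deg_v : (addBead B' r a u v).inDeg v = 2 ∧ (addBead B' r a u v).outDeg v = 1 := by
  constructor
  · show (∑ s ∈ (addBead B' r a u v).verts, (addBead B' r a u v).mult s v) = 2
    rw [ab_sum_split E (fun s => (addBead B' r a u v).mult s v)]
    rw [E.ab_mult_uv, E.ab_mult_v_t E.ne_av.symm]
    have h1 : (∑ s ∈ B'.verts, (addBead B' r a u v).mult s v) = 0 :=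
      Finset.sum_eq_zero (fun s hs => E.ab_mult_s_v (fun h => E.u_new (h ▸ hs)))
    omega
  · show (∑ t ∈ (addBead B' r a u v).verts, (addBead B' r a u v).mult v t) = 1
    rw [ab_sum_split E (fun t => (addBead B' r a u v).mult v t)]
    rw [E.ab_mult_v_t E.ne_au.symm, E.ab_mult_v_t E.ne_av.symm]
    have h1 : (∑ t ∈ B'.verts, (addBead B' r a u v).mult v t) = 1 := by
      rw [Finset.sum_eq_single_of_mem a E.a_mem]
      · exact E.ab_mult_va
      · intro t ht hta
        exact E.ab_mult_v_t hta
    omega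

lemma ab_adj_cases {s t : ℕ} (h : (addBead B' r a u v).Adj s t) :
    (s = r ∧ t = u) ∨ (s = u ∧ t = v) ∨ (s = v ∧ t = a) ∨
    (B'.Adj s t ∧ s ≠ u ∧ s ≠ v ∧ t ≠ u ∧ t ≠ v ∧ ¬ (s = r ∧ t = a)) := by
  rw [adj_iff] at h
  by_cases h1 : s = r ∧ t = a
  · exfalso
    rw [h1.1, h1.2, E.ab_mult_ra] at h
    omega
  by_cases h2 : s = r ∧ t = u
  · exact Or.inl h2
  by_cases h3 : s = u ∧ t = v
  · exact Or.inr (Or.inl h3)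
  by_cases h4 : s = v ∧ t = a
  · exact Or.inr (Or.inr (Or.inl h4))
  by_cases h5 : s = u ∨ s = v ∨ t = u ∨ t = v
  · exfalso
    have hz : (addBead B' r a u v).mult s t = 0 := by
      simp [addBead, h1, h2, h3, h4, h5]
    omega
  · push_neg at h5
    refine Or.inr (Or.inr (Or.inr ⟨?_, h5.1, h5.2.1, h5.2.2.1, h5.2.2.2, h1⟩))
    rw [adj_iff, ← E.ab_mult_eq h5.1 h5.2.1 h5.2.2.1 h5.2.2.2 h1]
    exact h

lemma ab_lift_walk (hS' : B'.Supported) {p : List Arc} {s t : ℕ}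
    (hw : B'.IsWalk p s t) (hsr : s ≠ r) :
    (addBead B' r a u v).IsWalk p s t := by
  have hcl : ∀ q w, B'.Adj q w → w = r → q = r := by
    intro q w hq hw'
    exfalso
    rw [hw'] at hq
    have := E.into_r q
    rw [adj_iff] at hq
    omega
  have hsafe := walk_avoid (G := B') (fun w => w = r) hcl hw hsr
  obtain ⟨hne, hok, hch, hh, hl⟩ := hw
  refine ⟨hne, ?_, hch, hh, hl⟩
  intro e he
  have h1 : B'.Adj e.1 e.2.1 := lt_of_le_of_lt (Nat.zero_le _) (hok e he)
  have h2 := hS' _ _ h1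
  show e.2.2 < (addBead B' r a u v).mult e.1 e.2.1
  rw [E.ab_mult_eq (fun h => E.u_new (h ▸ h2.1)) (fun h => E.v_new (h ▸ h2.1))
    (fun h => E.u_new (h ▸ h2.2)) (fun h => E.v_new (h ▸ h2.2))
    (fun hra => (hsafe e he).1 hra.1)]
  exact hok e he

lemma ab_root : (addBead B' r a u v).IsRoot r := by
  refine ⟨E.ab_mem' E.r_mem, ?_, ?_⟩
  · rw [E.ab_inDeg r E.r_mem]; exact E.hr.2.1
  · rw [E.ab_outDeg r E.r_mem]; exact E.hr.2.2

lemma ab_beaded {X : Finset ℕ} (hB' : B'.IsBeadedTree X) :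
    (addBead B' r a u v).IsBeadedTree X := by
  have hN := hB'.1
  have hS' := hN.supported
  have hA' := hN.acyclic
  have root_eq : ∀ w, B'.IsRoot w → w = r := by
    intro w hw
    obtain ⟨r0, hr0, hu⟩ := hN.root
    rw [hu w hw, hu r E.hr]
  constructor
  · constructor
    · -- root
      refine ⟨r, E.ab_root, ?_⟩
      intro w hw
      rcases E.ab_mem.mp hw.1 with rfl | rfl | hwm
      · have := E.ab_deg_u.1
        have := hw.2.1
        omega
      · have := E.ab_deg_v.1
        have := hw.2.1
        omega
      · apply root_eq
        exact ⟨hwm, by rw [← E.ab_inDeg w hwm]; exact hw.2.1,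
          by rw [← E.ab_outDeg w hwm]; exact hw.2.2⟩
    · -- nodes
      intro w hw
      rcases E.ab_mem.mp hw with rfl | rfl | hwm
      · exact Or.inr (Or.inl ⟨hw, E.ab_deg_u.1, E.ab_deg_u.2⟩)
      · exact Or.inr (Or.inr (Or.inl ⟨hw, E.ab_deg_v.1, E.ab_deg_v.2⟩))
      · have hin := E.ab_inDeg w hwm
        have hout := E.ab_outDeg w hwm
        rcases hN.nodes w hwm with ⟨-, h1, h2⟩ | ⟨-, h1, h2⟩ | ⟨-, h1, h2⟩ | ⟨-, h1, h2⟩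
        · exact Or.inl ⟨hw, by omega, by omega⟩
        · exact Or.inr (Or.inl ⟨hw, by omega, by omega⟩)
        · exact Or.inr (Or.inr (Or.inl ⟨hw, by omega, by omega⟩))
        · exact Or.inr (Or.inr (Or.inr ⟨hw, by omega, by omega⟩))
    · -- acyclic
      have hA' := hB'.1.acyclic
      have hSx := hB'.1.supported
      apply acyclic_of_rank (fun w =>
        if w = u then 3 * B'.rnk r + 1 else if w = v then 3 * B'.rnk r + 2 else 3 * B'.rnk w)
      intro s t hadj
      have hfu : (if u = u then 3 * B'.rnk r + 1 else if u = v then 3 * B'.rnk r + 2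
          else 3 * B'.rnk u) = 3 * B'.rnk r + 1 := by simp
      have hfv : (if v = u then 3 * B'.rnk r + 1 else if v = v then 3 * B'.rnk r + 2
          else 3 * B'.rnk v) = 3 * B'.rnk r + 2 := by simp [E.ne_uv.symm]
      have hfw : ∀ w, w ≠ u → w ≠ v → (if w = u then 3 * B'.rnk r + 1
          else if w = v then 3 * B'.rnk r + 2 else 3 * B'.rnk w) = 3 * B'.rnk w := by
        intro w h1 h2
        simp [h1, h2]
      show (if s = u then _ else _) < (if t = u then _ else _)
      rcases E.ab_adj_cases hadj with ⟨h1, h2⟩ | ⟨h1, h2⟩ | ⟨h1, h2⟩ |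
        ⟨hadj', hsu, hsv, htu, htv, -⟩
      · rw [h1, h2, hfu, hfw r E.ne_ru E.ne_rv]
        omega
      · rw [h1, h2, hfu, hfv]
        omega
      · rw [h1, h2, hfv, hfw a E.ne_au E.ne_av]
        have := rnk_lt hA' hSx (adj_iff.mpr (by have := E.mra; omega) : B'.Adj r a)
        omega
      · rw [hfw s hsu hsv, hfw t htu htv]
        have := rnk_lt hA' hSx hadj'
        omega
    · -- supported
      intro s t hadj
      rcases E.ab_adj_cases hadj with ⟨h1, h2⟩ | ⟨h1, h2⟩ | ⟨h1, h2⟩ |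
        ⟨hadj', hsu, hsv, htu, htv, -⟩
      · rw [h1, h2]
        exact ⟨E.ab_mem' E.r_mem, E.ab_mem.mpr (Or.inl rfl)⟩
      · rw [h1, h2]
        exact ⟨E.ab_mem.mpr (Or.inl rfl), E.ab_mem.mpr (Or.inr (Or.inl rfl))⟩
      · rw [h1, h2]
        exact ⟨E.ab_mem.mpr (Or.inr (Or.inl rfl)), E.ab_mem' E.a_mem⟩
      · have := hS' s t hadj'
        exact ⟨E.ab_mem' this.1, E.ab_mem' this.2⟩
    · -- labels
      intro w
      by_cases hwu : w = u
      · constructor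
        · rintro ⟨z, hz⟩
          rw [hwu] at hz
          simp [addBead] at hz
        · rintro ⟨hmem, hin, hout⟩
          rw [hwu] at hout
          have := E.ab_deg_u.2
          omega
      · by_cases hwv : w = v
        · constructor
          · rintro ⟨z, hz⟩
            rw [hwv] at hz
            simp [addBead, E.ne_uv.symm] at hz
          · rintro ⟨hmem, hin, hout⟩
            rw [hwv] at hout
            have := E.ab_deg_v.2
            omega
        · have hlab : (addBead B' r a u v).label w = B'.label w := by
            simp [addBead, hwu, hwv]
          rw [hlab]
          by_cases hwm : w ∈ B'.verts
          · rw [hN.labels w]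
            constructor
            · rintro ⟨_, h1, h2⟩
              exact ⟨E.ab_mem' hwm, by rw [E.ab_inDeg w hwm]; exact h1,
                by rw [E.ab_outDeg w hwm]; exact h2⟩
            · rintro ⟨_, h1, h2⟩
              exact ⟨hwm, by rw [← E.ab_inDeg w hwm]; exact h1,
                by rw [← E.ab_outDeg w hwm]; exact h2⟩
          · constructor
            · intro hz
              exact absurd ((hN.labels w).mp hz).1 hwm
            · intro hlf
              rcases E.ab_mem.mp hlf.1 with h | h | h
              · exact absurd h hwu
              · exact absurd h hwv
              · exact absurd h hwm
    · -- labelsSub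
      intro w z hw
      by_cases hwu : w = u
      · rw [hwu] at hw; simp [addBead] at hw
      · by_cases hwv : w = v
        · rw [hwv] at hw; simp [addBead, E.ne_uv.symm] at hw
        · apply hN.labelsSub w z
          rwa [show (addBead B' r a u v).label w = B'.label w by simp [addBead, hwu, hwv]] at hw
    · -- labelsOnto
      intro z hz
      obtain ⟨w, hw, huniq⟩ := hN.labelsOnto z hz
      have hwleaf : B'.IsLeafNode w := (hN.labels w).mp ⟨z, hw⟩
      have hwu : w ≠ u := fun h => E.u_new (h ▸ hwleaf.1)
      have hwv : w ≠ v := fun h => E.v_new (h ▸ hwleaf.1)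
      refine ⟨w, ?_, ?_⟩
      · show (addBead B' r a u v).label w = some z
        rw [show (addBead B' r a u v).label w = B'.label w by simp [addBead, hwu, hwv]]
        exact hw
      · intro w' hw'
        have hw2 : (addBead B' r a u v).label w' = some z := hw'
        by_cases hwu' : w' = u
        · exfalso; rw [hwu'] at hw2; simp [addBead] at hw2
        · by_cases hwv' : w' = v
          · exfalso; rw [hwv'] at hw2; simp [addBead, E.ne_uv.symm] at hw2
          · apply huniq w'
            show B'.label w' = some z
            rwa [show (addBead B' r a u v).label w' = B'.label w'
              by simp [addBead, hwu', hwv']] at hw2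
  · -- beaded
    intro w hw hin
    rcases E.ab_mem.mp hw with rfl | rfl | hwm
    · have := E.ab_deg_u.1
      omega
    · exact ⟨u, E.ab_mult_uv⟩
    · have hin' : B'.inDeg w = 2 := by rw [← E.ab_inDeg w hwm]; exact hin
      obtain ⟨p, hp⟩ := hB'.2 w hwm hin'
      have hpm : p ∈ B'.verts := (hB'.1.supported p w (adj_iff.mpr (by omega))).1
      have hra : ¬ (p = r ∧ w = a) := by
        rintro ⟨rfl, rfl⟩
        have := E.mra
        omega
      refine ⟨p, ?_⟩
      rw [E.ab_mult_eq (fun h => E.u_new (h ▸ hpm)) (fun h => E.v_new (h ▸ hpm))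
        (fun h => E.u_new (h ▸ hwm)) (fun h => E.v_new (h ▸ hwm)) hra]
      exact hp

lemma ab_reticNum {X : Finset ℕ} (hB' : B'.IsBeadedTree X) :
    (addBead B' r a u v).reticNum = B'.reticNum + 1 := by
  have key : (addBead B' r a u v).verts.filter
        (fun w => (addBead B' r a u v).inDeg w = 2 ∧ (addBead B' r a u v).outDeg w = 1)
      = insert v (B'.verts.filter (fun w => B'.inDeg w = 2 ∧ B'.outDeg w = 1)) := by
    ext w
    simp only [Finset.mem_filter, Finset.mem_insert]
    constructor
    · intro ⟨hw, h2⟩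
      rcases E.ab_mem.mp hw with rfl | rfl | hwm
      · have := E.ab_deg_u.1
        omega
      · exact Or.inl rfl
      · exact Or.inr ⟨hwm, by rw [← E.ab_inDeg w hwm]; exact h2.1,
          by rw [← E.ab_outDeg w hwm]; exact h2.2⟩
    · intro hw
      rcases hw with rfl | ⟨hwm, h2, h3⟩
      · exact ⟨E.ab_mem.mpr (Or.inr (Or.inl rfl)), E.ab_deg_v.1, E.ab_deg_v.2⟩
      · exact ⟨E.ab_mem' hwm, by rw [E.ab_inDeg w hwm]; exact h2,
          by rw [E.ab_outDeg w hwm]; exact h3⟩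
  show ((addBead B' r a u v).verts.filter _).card = _
  rw [key, Finset.card_insert_of_notMem]
  · rfl
  · intro hv
    exact E.v_new (Finset.mem_filter.mp hv).1

lemma ab_bead_at_root : (addBead B' r a u v).HasBeadAtRoot :=
  ⟨r, u, v, E.ab_root, adj_iff.mpr (by have := E.ab_mult_ru; omega), E.ab_mult_uv⟩

end AddData

end DG


namespace DG

lemma isWalk_cons_of {G : DG} {e : Arc} {p : List Arc} {s m t : ℕ}
    (hok : G.ArcOK e) (he1 : e.1 = s) (he2 : e.2.1 = m)
    (hp : G.IsWalk p m t) : G.IsWalk (e :: p) s t := by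
  obtain ⟨hne, hokp, hch, hh, hl⟩ := hp
  refine ⟨by simp, ?_, ?_, ?_, ?_⟩
  · intro f hf
    rcases List.mem_cons.mp hf with rfl | hf
    · exact hok
    · exact hokp f hf
  · simp only [List.Chain', List.isChain_cons]
    refine ⟨?_, hch⟩
    intro b hb
    rw [Option.mem_def] at hb
    rw [hb] at hh
    simp at hh
    rw [he2, ← hh]
  · simp [he1]
  · cases p with
    | nil => exact absurd rfl hne
    | cons f q => rw [List.getLast?_cons_cons]; exact hl

/-- Construct, inside `addBead B' r a u v`, a walk from `u` through the bead to
any non-root vertex `z` of `B'`. -/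
lemma AddData.ab_bead_walk {B' : DG} {r a u v : ℕ} (E : AddData B' r a u v)
    (hS' : B'.Supported) (hA' : B'.Acyclic)
    (hin' : ∀ w ∈ B'.verts, w ≠ r → 0 < B'.inDeg w)
    {z : ℕ} (hz : z ∈ B'.verts) (hzr : z ≠ r) (i : ℕ) (hi : i < 2) :
    ∃ q, (addBead B' r a u v).IsWalk ((u, v, i) :: (v, a, 0) :: q) u z := by
  obtain ⟨P, hP⟩ := reach_walk (root_reach hA' hS' r hin' z hz hzr)
  obtain ⟨e, rest, rfl⟩ := List.exists_cons_of_ne_nil hP.1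
  obtain ⟨he1, heok, hrest0, hrest⟩ := isWalk_cons hP
  have he : e = (r, a, 0) := single_arc_of E.mra E.r_out e (r, a, 0) heok
    (show (0 : ℕ) < B'.mult r a by rw [E.mra]; omega) he1 rfl
  have harc_uv : (addBead B' r a u v).ArcOK (u, v, i) := by
    show i < (addBead B' r a u v).mult u v
    rw [E.ab_mult_uv]
    omega
  have harc_va : (addBead B' r a u v).ArcOK (v, a, 0) := by
    show 0 < (addBead B' r a u v).mult v a
    rw [E.ab_mult_va]
    omega
  by_cases hnil : rest = []
  · have hza : a = z := by
      have := hrest0 hnil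
      rw [he] at this
      exact this
    subst hnil
    refine ⟨[], by simp, ?_, ?_, by simp, ?_⟩
    · intro f hf
      simp at hf
      rcases hf with rfl | rfl <;> assumption
    · simp [List.Chain']
    · simp [hza]
  · have hrw : B'.IsWalk rest a z := by
      have := hrest hnil
      rwa [he] at this
    have hlift := E.ab_lift_walk hS' hrw E.ne_ra.symm
    exact ⟨rest, isWalk_cons_of harc_uv rfl rfl (isWalk_cons_of harc_va rfl rfl hlift)⟩

lemma backward_displays {X : Finset ℕ} {B' T : DG} {r a u v rT x y y' : ℕ}
    (hB' : B'.IsBeadedTree X) (E : AddData B' r a u v)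
    (C : F1Ctx X T rT x y y')
    (hd1 : B'.Displays (f1del T rT x y y'))
    (hd2 : B'.Displays (f1del T rT x y' y)) :
    (addBead B' r a u v).Displays T := by
  obtain ⟨h1, hE1, hm1, hl1, hw1, hv1⟩ := hd1
  obtain ⟨h2, hE2, hm2, hl2, hw2, hv2⟩ := hd2
  have hS' := hB'.1.supported
  have hA' := hB'.1.acyclic
  have hSP := C.hS
  have C' := C.swap
  have root_eq' : ∀ w, B'.IsRoot w → w = r := by
    intro w hw
    obtain ⟨r0, hr0, hu⟩ := hB'.1.root
    rw [hu w hw, hu r E.hr]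
  have hin' : ∀ w ∈ B'.verts, w ≠ r → 0 < B'.inDeg w := by
    intro w hw hwr
    rcases hB'.1.nodes w hw with hcls | hcls | hcls | hcls
    · exact absurd (root_eq' w hcls) hwr
    · rw [hcls.2.1]; omega
    · rw [hcls.2.1]; omega
    · rw [hcls.2.1]; omega
  -- generic "no embedded vertex maps to the root of B'" fact
  have not_r_gen : ∀ (y0 y0' : ℕ) (C0 : F1Ctx X T rT x y0 y0') (h0 : ℕ → ℕ)
      (hE0 : ℕ → ℕ → List Arc),
      (∀ s t, (f1del T rT x y0 y0').Adj s t → B'.IsWalk (hE0 s t) (h0 s) (h0 t)) →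
      ∀ w ∈ (f1del T rT x y0 y0').verts, w ≠ rT → h0 w ≠ r := by
    intro y0 y0' C0 h0 hE0 hw0 w hw hwr heq
    have hin : 0 < (f1del T rT x y0 y0').inDeg w := by
      rw [C0.f1_inDeg w hw hwr, C0.inDeg_one w (C0.f1_mem.mp hw).1 hwr]
      omega
    obtain ⟨p, hpmem, hppos⟩ := sum_pos_exists hin
    obtain ⟨q, hq⟩ := walk_target_adj' (hw0 p w hppos)
    rw [heq] at hq
    exact absurd (E.into_r q) (by omega)
  have not_r_1 := not_r_gen y y' C h1 hE1 hw1
  have not_r_2 := not_r_gen y' y C' h2 hE2 hw2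
  -- bead walks to the images of y and y'
  have hy1mem : h1 y ∈ B'.verts := hm1 y C.f1_y_mem
  have hy1r : h1 y ≠ r := not_r_1 y C.f1_y_mem C.y_ne_r
  have hy2mem : h2 y' ∈ B'.verts := hm2 y' C'.f1_y_mem
  have hy2r : h2 y' ≠ r := not_r_2 y' C'.f1_y_mem C'.y_ne_r
  obtain ⟨q1, hWy⟩ := E.ab_bead_walk hS' hA' hin' hy1mem hy1r 0 (by omega)
  obtain ⟨q2, hWy'⟩ := E.ab_bead_walk hS' hA' hin' hy2mem hy2r 1 (by omega)
  -- facts about T's structure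
  have adj_rT : ∀ t, T.Adj rT t → t = x := by
    intro t ht
    by_contra htx
    have := C.r_child.2 t htx
    rw [adj_iff] at ht
    omega
  have adj_x : ∀ t, T.Adj x t → t = y ∨ t = y' := by
    intro t ht
    by_contra htn
    push_neg at htn
    have := C.x_children.2.2 t htn.1 htn.2
    rw [adj_iff] at ht
    omega
  have t_ne_rT : ∀ s t, T.Adj s t → t ≠ rT := by
    intro s t ht hteq
    rw [hteq] at ht
    have := C.mult_into_r s
    rw [adj_iff] at ht
    omega
  have t_ne_x : ∀ s t, T.Adj s t → s ≠ rT → t ≠ x := by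
    intro s t ht hs hteq
    rw [hteq] at ht
    rw [adj_iff] at ht
    by_cases hsr : s = rT
    · exact hs hsr
    · have := C.mult_into_x s hsr
      omega
  -- membership lemmas in the two restricted trees
  have memT1 : ∀ w ∈ T.verts, w ≠ x → ¬ T.Reaches y' w → w ∈ (f1del T rT x y y').verts :=
    fun w hw hwx hwre => C.f1_mem.mpr ⟨hw, hwre, hwx⟩
  have memT2 : ∀ w ∈ T.verts, w ≠ x → T.Reaches y' w → w ∈ (f1del T rT x y' y).verts :=
    fun w hw hwx hwre => C'.f1_mem.mpr ⟨hw, C'.disjoint_desc w hwre, hwx⟩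
  classical
  refine ⟨fun w => if w = rT then r else if w = x then u
      else if T.Reaches y' w then h2 w else h1 w,
    fun s t => if s = rT then [(r, u, 0)]
      else if s = x then (if t = y then (u, v, 0) :: (v, a, 0) :: q1
        else (u, v, 1) :: (v, a, 0) :: q2)
      else if T.Reaches y' s then hE2 s t else hE1 s t, ?_, ?_, ?_, ?_⟩
  · -- vertices
    intro w hw
    show (if w = rT then r else if w = x then u
      else if T.Reaches y' w then h2 w else h1 w) ∈ (addBead B' r a u v).verts
    by_cases hwr : w = rT
    · rw [if_pos hwr]
      exact E.ab_mem' E.r_mem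
    · rw [if_neg hwr]
      by_cases hwx : w = x
      · rw [if_pos hwx]
        exact E.ab_mem.mpr (Or.inl rfl)
      · rw [if_neg hwx]
        by_cases hre : T.Reaches y' w
        · rw [if_pos hre]
          exact E.ab_mem' (hm2 w (memT2 w hw hwx hre))
        · rw [if_neg hre]
          exact E.ab_mem' (hm1 w (memT1 w hw hwx hre))
  · -- leaves
    intro w hlf
    have hwr : w ≠ rT := by
      rintro rfl
      have := C.hroot.2.1
      have := hlf.2.1
      omega
    have hwx : w ≠ x := by
      rintro rfl
      have := C.x_tree.2
      have := hlf.2.2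
      omega
    show (addBead B' r a u v).IsLeafNode (if w = rT then r else if w = x then u
        else if T.Reaches y' w then h2 w else h1 w) ∧
      (addBead B' r a u v).label (if w = rT then r else if w = x then u
        else if T.Reaches y' w then h2 w else h1 w) = T.label w
    rw [if_neg hwr, if_neg hwx]
    by_cases hre : T.Reaches y' w
    · rw [if_pos hre]
      have hmem2 := memT2 w hlf.1 hwx hre
      have hlf2 : (f1del T rT x y' y).IsLeafNode w := (C'.f1_leaf_iff w).mpr ⟨hmem2, hlf⟩
      obtain ⟨hbl, hblab⟩ := hl2 w hlf2
      have hmemB : h2 w ∈ B'.verts := hbl.1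
      have hwu : h2 w ≠ u := fun h => E.u_new (h ▸ hmemB)
      have hwv : h2 w ≠ v := fun h => E.v_new (h ▸ hmemB)
      constructor
      · exact ⟨E.ab_mem' hmemB, by rw [E.ab_inDeg _ hmemB]; exact hbl.2.1,
          by rw [E.ab_outDeg _ hmemB]; exact hbl.2.2⟩
      · rw [show (addBead B' r a u v).label (h2 w) = B'.label (h2 w)
          by simp [addBead, hwu, hwv]]
        rw [hblab, C'.f1_label hwx (C'.disjoint_desc w hre)]
    · rw [if_neg hre]
      have hmem1 := memT1 w hlf.1 hwx hre
      have hlf1 : (f1del T rT x y y').IsLeafNode w := (C.f1_leaf_iff w).mpr ⟨hmem1, hlf⟩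
      obtain ⟨hbl, hblab⟩ := hl1 w hlf1
      have hmemB : h1 w ∈ B'.verts := hbl.1
      have hwu : h1 w ≠ u := fun h => E.u_new (h ▸ hmemB)
      have hwv : h1 w ≠ v := fun h => E.v_new (h ▸ hmemB)
      constructor
      · exact ⟨E.ab_mem' hmemB, by rw [E.ab_inDeg _ hmemB]; exact hbl.2.1,
          by rw [E.ab_outDeg _ hmemB]; exact hbl.2.2⟩
      · rw [show (addBead B' r a u v).label (h1 w) = B'.label (h1 w)
          by simp [addBead, hwu, hwv]]
        rw [hblab, C.f1_label hwx hre]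
  · -- walks
    intro s t hadj
    show (addBead B' r a u v).IsWalk
      (if s = rT then [(r, u, 0)]
        else if s = x then (if t = y then (u, v, 0) :: (v, a, 0) :: q1
          else (u, v, 1) :: (v, a, 0) :: q2)
        else if T.Reaches y' s then hE2 s t else hE1 s t)
      (if s = rT then r else if s = x then u
        else if T.Reaches y' s then h2 s else h1 s)
      (if t = rT then r else if t = x then u
        else if T.Reaches y' t then h2 t else h1 t)
    have htrT : t ≠ rT := t_ne_rT s t hadj
    by_cases hsr : s = rT
    · rw [if_pos hsr, if_pos hsr, if_neg htrT]
      have htx : t = x := adj_rT t (hsr ▸ hadj)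
      rw [if_pos htx]
      have harc : (addBead B' r a u v).ArcOK (r, u, 0) := by
        show 0 < (addBead B' r a u v).mult r u
        rw [E.ab_mult_ru]
        omega
      exact ⟨by simp, fun e he => by simp at he; rw [he]; exact harc, by simp [List.Chain'], by simp, by simp⟩
    · rw [if_neg hsr, if_neg hsr]
      by_cases hsx : s = x
      · rw [if_pos hsx, if_pos hsx]
        rcases adj_x t (hsx ▸ hadj) with hty | hty
        · rw [hty, if_pos rfl, if_neg C.y_ne_r, if_neg C.y_ne_x, if_neg C.not_reach_y'_y]
          exact hWy
        · rw [hty, if_neg (Ne.symm C.hyy'), if_neg C.y'_ne_r, if_neg C.y'_ne_x,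
            if_pos (show T.Reaches y' y' from Relation.ReflTransGen.refl)]
          exact hWy'
      · rw [if_neg hsx, if_neg hsx]
        have hsmem : s ∈ T.verts := (hSP s t hadj).1
        have htx : t ≠ x := t_ne_x s t hadj hsr
        rw [if_neg htrT, if_neg htx]
        by_cases hre : T.Reaches y' s
        · rw [if_pos hre, if_pos hre]
          have hret : T.Reaches y' t := Relation.ReflTransGen.tail hre hadj
          rw [if_pos hret]
          have hT2 : (f1del T rT x y' y).Adj s t := by
            rw [C'.f1_adj_iff]
            exact Or.inr ⟨hadj, hsx, htx, C'.disjoint_desc s hre, C'.disjoint_desc t hret⟩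
          exact E.ab_lift_walk hS' (hw2 s t hT2)
            (not_r_2 s (memT2 s hsmem hsx hre) hsr)
        · rw [if_neg hre, if_neg hre]
          have hret : ¬ T.Reaches y' t := by
            intro hret
            rcases C.reach_y'_step s t hadj hret with h | ⟨-, h⟩
            · exact hre h
            · exact hsx h
          rw [if_neg hret]
          have hT1 : (f1del T rT x y y').Adj s t := by
            rw [C.f1_adj_iff]
            exact Or.inr ⟨hadj, hsx, htx, hre, hret⟩
          exact E.ab_lift_walk hS' (hw1 s t hT1)
            (not_r_1 s (memT1 s hsmem hsx hre) hsr)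
  · -- divergence
    intro s t t' had1 had2 hne
    show (if s = rT then [(r, u, 0)]
        else if s = x then (if t = y then (u, v, 0) :: (v, a, 0) :: q1
          else (u, v, 1) :: (v, a, 0) :: q2)
        else if T.Reaches y' s then hE2 s t else hE1 s t).head? ≠
      (if s = rT then [(r, u, 0)]
        else if s = x then (if t' = y then (u, v, 0) :: (v, a, 0) :: q1
          else (u, v, 1) :: (v, a, 0) :: q2)
        else if T.Reaches y' s then hE2 s t' else hE1 s t').head?
    by_cases hsr : s = rT
    · exfalso
      have h1' := adj_rT t (hsr ▸ had1)
      have h2' := adj_rT t' (hsr ▸ had2)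
      exact hne (h1'.trans h2'.symm)
    · rw [if_neg hsr, if_neg hsr]
      by_cases hsx : s = x
      · rw [if_pos hsx, if_pos hsx]
        rcases adj_x t (hsx ▸ had1) with hty | hty <;>
          rcases adj_x t' (hsx ▸ had2) with hty2 | hty2
        · exact absurd (hty.trans hty2.symm) hne
        · rw [hty, hty2, if_pos rfl, if_neg (Ne.symm C.hyy')]
          simp
        · rw [hty, hty2, if_neg (Ne.symm C.hyy'), if_pos rfl]
          simp
        · exact absurd (hty.trans hty2.symm) hne
      · rw [if_neg hsx, if_neg hsx]
        have hsmem : s ∈ T.verts := (hSP s t had1).1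
        have htx1 : t ≠ x := t_ne_x s t had1 hsr
        have htx2 : t' ≠ x := t_ne_x s t' had2 hsr
        by_cases hre : T.Reaches y' s
        · rw [if_pos hre, if_pos hre]
          have hret1 : T.Reaches y' t := Relation.ReflTransGen.tail hre had1
          have hret2 : T.Reaches y' t' := Relation.ReflTransGen.tail hre had2
          have hT1 : (f1del T rT x y' y).Adj s t := by
            rw [C'.f1_adj_iff]
            exact Or.inr ⟨had1, hsx, htx1, C'.disjoint_desc s hre, C'.disjoint_desc t hret1⟩
          have hT2 : (f1del T rT x y' y).Adj s t' := by
            rw [C'.f1_adj_iff]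
            exact Or.inr ⟨had2, hsx, htx2, C'.disjoint_desc s hre, C'.disjoint_desc t' hret2⟩
          exact hv2 s t t' hT1 hT2 hne
        · rw [if_neg hre, if_neg hre]
          have hret1 : ¬ T.Reaches y' t := by
            intro hret
            rcases C.reach_y'_step s t had1 hret with h | ⟨-, h⟩
            · exact hre h
            · exact hsx h
          have hret2 : ¬ T.Reaches y' t' := by
            intro hret
            rcases C.reach_y'_step s t' had2 hret with h | ⟨-, h⟩
            · exact hre h
            · exact hsx h
          have hT1 : (f1del T rT x y y').Adj s t := by
            rw [C.f1_adj_iff]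
            exact Or.inr ⟨had1, hsx, htx1, hre, hret1⟩
          have hT2 : (f1del T rT x y y').Adj s t' := by
            rw [C.f1_adj_iff]
            exact Or.inr ⟨had2, hsx, htx2, hre, hret2⟩
          exact hv1 s t t' hT1 hT2 hne

end DG

/-- Lemma 3: there is a solution to Beaded Tree on `𝒯` with a
bead at the root and reticulation number `k` iff `F1(𝒯)` has a solution with
reticulation number `k-1`. -/
theorem bead_at_root_iff_F1_solution (X : Finset ℕ) (Ts : Set DG)
    (hT : ∀ T ∈ Ts, DG.IsMulTree X T ∧ 1 < T.numLeaves) (k : ℕ) :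
    (∃ B : DG, DG.Solution X Ts B ∧ B.HasBeadAtRoot ∧ B.reticNum = k) ↔
    (∃ B' : DG, DG.Solution X (DG.F1Set Ts) B' ∧ B'.reticNum + 1 = k) := by
  constructor
  · rintro ⟨B, ⟨hBT, hdisp⟩, hbr, rfl⟩
    obtain ⟨r, u, v, a, D⟩ := DG.bead_data_of hBT hbr
    refine ⟨DG.delBead B r u v a, ⟨D.db_beaded hBT, ?_⟩, D.db_reticNum hBT⟩
    rintro T' ⟨T, hTmem, rT, x, y, y', hroot, hrx, hxy, hxy', hyy', rfl⟩
    have C : DG.F1Ctx X T rT x y y' := ⟨(hT T hTmem).1, hroot, hrx, hxy, hxy', hyy'⟩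
    exact DG.forward_displays hBT D C (hdisp T hTmem)
  · rintro ⟨B', ⟨hB'T, hdisp'⟩, hk⟩
    obtain ⟨r, a, u, v, E⟩ := DG.add_data_of hB'T
    refine ⟨DG.addBead B' r a u v, ⟨E.ab_beaded hB'T, ?_⟩, E.ab_bead_at_root,
      by rw [E.ab_reticNum hB'T]; omega⟩
    intro T hTmem
    obtain ⟨hmt, hnl⟩ := hT T hTmem
    have hS := hmt.supported
    have hA := hmt.acyclic
    obtain ⟨rT, hroot, -⟩ := hmt.root
    have root_eq : ∀ w, T.IsRoot w → w = rT := by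
      intro w hw
      obtain ⟨r0, hr0, hu⟩ := hmt.root
      rw [hu w hw, hu rT hroot]
    obtain ⟨x, hmx, hx0⟩ := DG.outDeg_one_unique hS hroot.2.2
    have hrx : T.Adj rT x := DG.adj_iff.mpr (by omega)
    have hx_mem : x ∈ T.verts := (hS rT x hrx).2
    have hx_in : 1 ≤ T.inDeg x := by
      have := DG.le_inDeg_of_mult (G := T) (q := rT) (w := x) hroot.1
      omega
    have hx_not_leaf : T.outDeg x ≠ 0 := by
      intro hout
      have hx_all : ∀ t, T.mult x t = 0 := DG.outDeg_zero_all hS hout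
      -- every vertex is rT or x
      have hin : ∀ w ∈ T.verts, w ≠ rT → 0 < T.inDeg w := by
        intro w hw hwr
        rcases hmt.nodes w hw with hcls | hcls | hcls
        · exact absurd (root_eq w hcls) hwr
        · rw [hcls.2.1]; omega
        · rw [hcls.2.1]; omega
      have hverts : ∀ w ∈ T.verts, w = rT ∨ w = x := by
        intro w hw
        by_cases hwr : w = rT
        · exact Or.inl hwr
        · right
          have hre := DG.root_reach hA hS rT hin w hw hwr
          clear hwr hw
          induction hre with
          | single h =>
            by_contra hne
            have := hx0 _ hne
            rw [DG.adj_iff] at h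
            omega
          | tail hb hbc ih =>
            rw [ih, DG.adj_iff, hx_all] at hbc
            omega
      -- but there are ≥ 2 labelled nodes
      obtain ⟨w1, hw1, w2, hw2, hww⟩ := Finset.one_lt_card.mp hnl
      have hleaf1 : T.IsLeafNode w1 := by
        obtain ⟨hw1v, hw1l⟩ := Finset.mem_filter.mp hw1
        obtain ⟨z, hz⟩ := Option.isSome_iff_exists.mp hw1l
        exact (hmt.labels w1).mp ⟨z, hz⟩
      have hleaf2 : T.IsLeafNode w2 := by
        obtain ⟨hw2v, hw2l⟩ := Finset.mem_filter.mp hw2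
        obtain ⟨z, hz⟩ := Option.isSome_iff_exists.mp hw2l
        exact (hmt.labels w2).mp ⟨z, hz⟩
      have hne1 : w1 ≠ rT := by
        rintro rfl
        have := hroot.2.1
        have := hleaf1.2.1
        omega
      have hne2 : w2 ≠ rT := by
        rintro rfl
        have := hroot.2.1
        have := hleaf2.2.1
        omega
      rcases hverts w1 hleaf1.1 with h | h
      · exact hne1 h
      rcases hverts w2 hleaf2.1 with h' | h'
      · exact hne2 h'
      exact hww (h.trans h'.symm)
    have hx_tree : T.outDeg x = 2 := by
      rcases hmt.nodes x hx_mem with hcls | hcls | hcls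
      · have := hcls.2.1
        omega
      · exact hcls.2.2
      · exact absurd hcls.2.2 hx_not_leaf
    obtain ⟨y, y', hyy', hxy, hxy'⟩ := DG.two_children hS hmt.simple hx_tree
    have C : DG.F1Ctx X T rT x y y' := ⟨hmt, hroot, hrx, hxy, hxy', hyy'⟩
    have hd1 : B'.Displays (T.f1del rT x y y') :=
      hdisp' _ ⟨T, hTmem, rT, x, y, y', hroot, hrx, hxy, hxy', hyy', rfl⟩
    have hd2 : B'.Displays (T.f1del rT x y' y) :=
      hdisp' _ ⟨T, hTmem, rT, x, y', y, hroot, hrx, hxy', hxy, hyy'.symm, rfl⟩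
    exact DG.backward_displays hB'T E C hd1 hd2
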